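/- arXiv:1501.00509 — 3 statements merged into one kernel-verified Lean document; each statement's English description precedes it below -/
import Mathlib

section
/- Let T(z) = Σ_{n≥1} n^{n-2} z^n/n! be the exponential generating function of labelled trees and T^•(z) = z T'(z) its Euler derivative. Then T^•(z) − (1/2)(T^•(z))^2 = T(z) as formal power series. -/
section AuxPolynomialIdentities
open Polynomial Finset


lemma comp_X_add_one_degree (p : Polynomial ℝ) : (p.comp (X + C 1)).degree = p.degree := by
  by_cases hp0 : p = 0
  · simp [hp0]
  · have h1 : (p.comp (X + C 1)).natDegree = p.natDegree := by
      rw [natDegree_comp, natDegree_X_add_C, mul_one]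
    have h2 : p.comp (X + C 1) ≠ 0 := fun h => hp0 (by
      have := congrArg (fun q => q.comp (X - C 1)) h
      simpa [comp_assoc] using this)
    rw [degree_eq_natDegree hp0, degree_eq_natDegree h2, h1]

lemma findiff : ∀ (m : ℕ) (p : Polynomial ℝ), p.degree < (m : ℕ) →
    ∑ k ∈ Finset.range (m + 1), (-1 : ℝ) ^ k * (m.choose k) * p.eval (k : ℝ) = 0 := by
  intro m
  induction m with
  | zero =>
    intro p hp
    have : p = 0 := degree_eq_bot.mp (Nat.WithBot.lt_zero_iff.mp hp)
    simp [this]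
  | succ m ih =>
    intro p hp
    set q : Polynomial ℝ := p - p.comp (X + C 1) with hq
    have hkey : ∀ x : ℝ, q.eval x = p.eval x - p.eval (x + 1) := by
      intro x; simp [hq]
    have hqdeg : q.degree < (m : ℕ) := by
      by_cases hp0 : p = 0
      · have : q = 0 := by rw [hq, hp0]; simp
        rw [this, degree_zero]
        exact WithBot.bot_lt_coe m
      · have hlt : q.degree < p.degree := by
          apply degree_sub_lt (comp_X_add_one_degree p).symm hp0
          rw [leadingCoeff_comp (by rw [natDegree_X_add_C]; norm_num)]
          have h1 : ((X : Polynomial ℝ) + C 1).leadingCoeff = 1 := leadingCoeff_X_add_C 1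
          rw [h1, one_pow, mul_one]
        have hple : p.degree ≤ (m : ℕ) := by
          have : p.degree < ((m : ℕ) + 1 : ℕ) := hp
          exact Order.lt_succ_iff.mp (by exact_mod_cast this)
        exact lt_of_lt_of_le hlt hple
    set f : ℕ → ℝ := fun k => p.eval (k : ℝ) with hf
    set A : ℝ := ∑ k ∈ Finset.range (m + 1), (-1 : ℝ) ^ k * (m.choose k) * f k with hA
    set B : ℝ := ∑ k ∈ Finset.range (m + 1), (-1 : ℝ) ^ k * (m.choose k) * f (k + 1) with hB
    have hshift : ∑ k ∈ Finset.range (m + 1), (-1 : ℝ) ^ (k+1) * (m.choose (k+1)) * f (k+1)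
        = A - f 0 := by
      have h0 := Finset.sum_range_succ' (fun j => (-1 : ℝ) ^ j * (m.choose j) * f j) (m + 1)
      have h1 : ∑ j ∈ Finset.range (m + 2), (-1 : ℝ) ^ j * (m.choose j) * f j = A := by
        rw [Finset.sum_range_succ, hA, Nat.choose_succ_self]
        simp
      rw [h1] at h0
      simp only [pow_zero, Nat.choose_zero_right, Nat.cast_one, one_mul] at h0
      linarith [h0]
    have hLHS : ∑ k ∈ Finset.range (m + 2), (-1 : ℝ) ^ k * ((m+1).choose k) * f k = A - B := by
      rw [Finset.sum_range_succ']
      have hterm : ∀ k, (-1 : ℝ) ^ (k+1) * ((m+1).choose (k+1)) * f (k+1)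
          = (-1 : ℝ) ^ (k+1) * (m.choose k) * f (k+1)
            + (-1 : ℝ) ^ (k+1) * (m.choose (k+1)) * f (k+1) := by
        intro k
        have : (((m+1).choose (k+1) : ℕ) : ℝ) = (m.choose k : ℝ) + (m.choose (k+1) : ℝ) := by
          rw [Nat.choose_succ_succ]; push_cast; ring
        rw [this]; ring
      rw [Finset.sum_congr rfl (fun k _ => hterm k), Finset.sum_add_distrib, hshift]
      have hB' : ∑ k ∈ Finset.range (m + 1), (-1 : ℝ) ^ (k+1) * (m.choose k) * f (k+1) = -B := by
        rw [hB, ← Finset.sum_neg_distrib]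
        exact Finset.sum_congr rfl (fun k _ => by ring)
      rw [hB']
      simp only [pow_zero, Nat.choose_zero_right, Nat.cast_one, one_mul]
      ring
    have hRHS : ∑ k ∈ Finset.range (m + 1), (-1 : ℝ) ^ k * (m.choose k) * q.eval (k : ℝ)
        = A - B := by
      rw [hA, hB, ← Finset.sum_sub_distrib]
      refine Finset.sum_congr rfl (fun k _ => ?_)
      rw [hkey]
      have : ((k : ℝ) + 1) = ((k + 1 : ℕ) : ℝ) := by push_cast; ring
      rw [this]; ring
    rw [hLHS, ← hRHS]
    exact ih q hqdeg


noncomputable def Pabel (n : ℕ) : Polynomial ℝ :=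
  ∑ k ∈ Finset.Icc 1 n,
    C ((n.choose k : ℝ) * (k : ℝ) ^ (k - 1)) * (X + C ((n : ℝ) - (k : ℝ))) ^ (n - k)

lemma choose_id (n k : ℕ) : (n + 1) * n.choose k = (n + 1).choose k * (n + 1 - k) := by
  have h1 := Nat.add_one_mul_choose_eq n k
  have h2 := Nat.choose_succ_right_eq (n + 1) k
  simpa [Nat.succ_eq_add_one] using h1.trans h2



lemma sum_Icc_one (m : ℕ) (f : ℕ → ℝ) :
    ∑ k ∈ Finset.Icc 1 m, f k = ∑ k ∈ Finset.range m, f (k + 1) := by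
  rw [← Finset.Ico_add_one_right_eq_Icc, Finset.sum_Ico_eq_sum_range]
  exact Finset.sum_congr rfl (fun k _ => by rw [add_comm])

lemma abel : ∀ n : ℕ, 1 ≤ n → Pabel n = C (n : ℝ) * (X + C (n : ℝ)) ^ (n - 1) := by
  intro n
  induction n with
  | zero => intro h; omega
  | succ n ih =>
    intro _
    by_cases hn : n = 0
    · subst hn; simp [Pabel]
    have hn1 : 1 ≤ n := Nat.one_le_iff_ne_zero.mpr hn
    set R : Polynomial ℝ := C ((n : ℕ) + 1 : ℝ) * (X + C ((n : ℕ) + 1 : ℝ)) ^ n with hR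
    have hder : derivative (Pabel (n + 1)) = derivative R := by
      have hcomp : (Pabel n).comp (X + C 1)
          = ∑ k ∈ Finset.Icc 1 n, C ((n.choose k : ℝ) * (k : ℝ) ^ (k - 1))
              * (X + C ((n : ℝ) + 1 - (k : ℝ))) ^ (n - k) := by
        rw [Pabel, Polynomial.sum_comp]
        refine Finset.sum_congr rfl (fun k _ => ?_)
        rw [mul_comp, C_comp, pow_comp, add_comp, X_comp, C_comp]
        congr 2
        rw [add_assoc, ← C_add]
        congr 1
        ring
      have hstep : derivative (Pabel (n + 1)) = C ((n : ℝ) + 1) * (Pabel n).comp (X + C 1) := by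
        rw [Pabel, derivative_sum, Finset.sum_Icc_succ_top (by omega : 1 ≤ n + 1), hcomp,
          Finset.mul_sum]
        have hlast : derivative (C (((n+1).choose (n+1) : ℝ) * ((n+1 : ℕ) : ℝ) ^ (n + 1 - 1))
            * (X + C (((n+1 : ℕ) : ℝ) - ((n+1 : ℕ) : ℝ))) ^ (n + 1 - (n + 1))) = 0 := by
          rw [Nat.sub_self, pow_zero, mul_one, derivative_C]
        rw [hlast, add_zero]
        refine Finset.sum_congr rfl (fun k hk => ?_)
        have hk1 : 1 ≤ k := (Finset.mem_Icc.mp hk).1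
        have hkn : k ≤ n := (Finset.mem_Icc.mp hk).2
        rw [derivative_C_mul, derivative_pow, derivative_add, derivative_X, derivative_C,
          add_zero, mul_one]
        have hexp : n + 1 - k - 1 = n - k := by omega
        have hco := congrArg (Nat.cast (R := ℝ)) (choose_id n k)
        push_cast [Nat.cast_sub (by omega : k ≤ n + 1)] at hco
        have hcast : (((n+1 : ℕ) : ℝ) - (k : ℝ)) = ((n : ℝ) + 1 - (k : ℝ)) := by push_cast; ring
        rw [hexp, hcast]
        simp only [← C_eq_natCast, ← mul_assoc, ← C_mul]
        congr 1
        congr 1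
        push_cast [Nat.cast_sub (by omega : k ≤ n + 1)]
        linear_combination (-(k : ℝ) ^ (k - 1)) * hco
      have hXcomp : ((X : Polynomial ℝ) + C (n : ℝ)).comp (X + C 1) = X + C ((n : ℝ) + 1) := by
        rw [add_comp, X_comp, C_comp, add_assoc, ← C_add]
        congr 1; ring
      rw [hstep, ih hn1, mul_comp, C_comp, pow_comp, hXcomp, hR, derivative_C_mul,
        derivative_pow, derivative_add, derivative_X, derivative_C, add_zero, mul_one]
    set x0 : ℝ := -((n : ℝ) + 1) with hx0
    have hfd := findiff (n + 1) (X ^ n) (by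
      rw [degree_X_pow]; exact_mod_cast Nat.lt_succ_self n)
    have heval : (Pabel (n + 1)).eval x0 = 0 := by
      rw [Pabel, eval_finset_sum]
      have h1 : ∀ k ∈ Finset.Icc 1 (n + 1),
          eval x0 (C (((n+1).choose k : ℝ) * (k : ℝ) ^ (k - 1))
            * (X + C ((((n+1) : ℕ) : ℝ) - (k : ℝ))) ^ ((n+1) - k))
          = (-1 : ℝ) ^ (n+1) * ((-1 : ℝ) ^ k * (((n+1).choose k : ℕ) : ℝ) * (k : ℝ) ^ n) := by
        intro k hk
        obtain ⟨hk1, hk2⟩ := Finset.mem_Icc.mp hk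
        rw [eval_mul, eval_C, eval_pow, eval_add, eval_X, eval_C]
        have hbase : x0 + ((((n+1) : ℕ) : ℝ) - (k : ℝ)) = -(k : ℝ) := by
          rw [hx0]; push_cast; ring
        rw [hbase, neg_pow]
        have hsign : (-1 : ℝ) ^ (n+1-k) = (-1 : ℝ) ^ (n+1) * (-1 : ℝ) ^ k := by
          have e1 : (-1 : ℝ) ^ (n+1-k) * (-1 : ℝ) ^ k = (-1 : ℝ) ^ (n+1) := by
            rw [← pow_add]; congr 1; omega
          have e2 : ((-1 : ℝ) ^ k) * ((-1 : ℝ) ^ k) = 1 := by rw [← mul_pow]; norm_num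
          calc (-1 : ℝ) ^ (n+1-k)
              = (-1 : ℝ) ^ (n+1-k) * (((-1 : ℝ) ^ k) * ((-1 : ℝ) ^ k)) := by rw [e2, mul_one]
            _ = (-1 : ℝ) ^ (n+1) * (-1 : ℝ) ^ k := by rw [← mul_assoc, e1]
        have hpow : (k : ℝ) ^ (k-1) * (k : ℝ) ^ (n+1-k) = (k : ℝ) ^ n := by
          rw [← pow_add]; congr 1; omega
        rw [hsign]
        linear_combination ((-1 : ℝ) ^ (n+1) * (-1 : ℝ) ^ k * (((n+1).choose k : ℕ) : ℝ)) * hpow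
      rw [Finset.sum_congr rfl h1, ← Finset.mul_sum]
      have h2 : ∑ k ∈ Finset.Icc 1 (n+1), (-1 : ℝ) ^ k * (((n+1).choose k : ℕ) : ℝ) * (k : ℝ) ^ n
          = 0 := by
        have h3 := hfd
        rw [Finset.sum_range_succ'] at h3
        simp only [eval_pow, eval_X, pow_zero, Nat.choose_zero_right, Nat.cast_one, one_mul,
          Nat.cast_zero] at h3
        rw [zero_pow (by omega : n ≠ 0), add_zero] at h3
        rw [sum_Icc_one]
        convert h3 using 2
      rw [h2, mul_zero]
    have hevalR : R.eval x0 = 0 := by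
      rw [hR, eval_mul, eval_C, eval_pow, eval_add, eval_X, eval_C, hx0]
      have : -((n : ℝ) + 1) + ((n : ℝ) + 1) = 0 := by ring
      rw [this, zero_pow (by omega : n ≠ 0), mul_zero]
    have hsub : derivative (Pabel (n+1) - R) = 0 := by
      rw [derivative_sub, hder, sub_self]
    have hC := eq_C_of_derivative_eq_zero hsub
    have h0 : (Pabel (n+1) - R).eval x0 = 0 := by
      rw [eval_sub, heval, hevalR, sub_self]
    rw [hC, eval_C] at h0
    have hfin : Pabel (n+1) = R := by
      have : Pabel (n+1) - R = 0 := by rw [hC, h0, map_zero]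
      exact sub_eq_zero.mp this
    rw [hfin, hR]
    push_cast
    ring




lemma key (n : ℕ) (hn : 1 ≤ n) :
    ∑ k ∈ Finset.Icc 1 n, (n.choose k : ℝ) * (k : ℝ) ^ (k - 1) * ((n - k : ℕ) : ℝ) ^ (n - k)
    = (n : ℝ) ^ n := by
  have h := congrArg (Polynomial.eval (0 : ℝ)) (abel n hn)
  rw [Pabel, eval_finset_sum] at h
  rw [eval_mul, eval_C, eval_pow, eval_add, eval_X, eval_C, zero_add] at h
  have hL : ∑ k ∈ Finset.Icc 1 n,
      eval 0 (C ((n.choose k : ℝ) * (k : ℝ) ^ (k - 1)) * (X + C ((n : ℝ) - (k : ℝ))) ^ (n - k))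
      = ∑ k ∈ Finset.Icc 1 n, (n.choose k : ℝ) * (k : ℝ) ^ (k - 1) * ((n - k : ℕ) : ℝ) ^ (n - k) := by
    refine Finset.sum_congr rfl (fun k hk => ?_)
    obtain ⟨hk1, hk2⟩ := Finset.mem_Icc.mp hk
    rw [eval_mul, eval_C, eval_pow, eval_add, eval_X, eval_C, zero_add,
      Nat.cast_sub hk2]
  rw [hL] at h
  rw [h]
  rw [← pow_succ']
  congr 1
  omega

lemma Skey (n : ℕ) (hn : 2 ≤ n) :
    ∑ k ∈ Finset.Icc 1 (n - 1),
      (n.choose k : ℝ) * (k : ℝ) ^ (k - 1) * ((n - k : ℕ) : ℝ) ^ (n - k - 1)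
    = 2 * ((n : ℝ) ^ (n - 1) - (n : ℝ) ^ (n - 2)) := by
  have hn1 : 1 ≤ n := by omega
  set g : ℕ → ℝ := fun k => (n.choose k : ℝ) * (k : ℝ) ^ (k - 1) * ((n - k : ℕ) : ℝ) ^ (n - k)
    with hg
  have hB : ∑ k ∈ Finset.Icc 1 (n - 1), g k = (n : ℝ) ^ n - (n : ℝ) ^ (n - 1) := by
    have h := key n hn1
    have hsplit : Finset.Icc 1 n = insert n (Finset.Icc 1 (n - 1)) := by
      ext x; simp [Finset.mem_Icc, Finset.mem_insert]; omega
    rw [hsplit, Finset.sum_insert (by simp [Finset.mem_Icc]; omega)] at h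
    have hnterm : (n.choose n : ℝ) * (n : ℝ) ^ (n - 1) * ((n - n : ℕ) : ℝ) ^ (n - n)
        = (n : ℝ) ^ (n - 1) := by
      simp
    rw [hnterm] at h
    linarith [h]
  have hswap : ∑ k ∈ Finset.Icc 1 (n - 1),
      (n.choose k : ℝ) * (k : ℝ) ^ k * ((n - k : ℕ) : ℝ) ^ (n - k - 1)
      = ∑ k ∈ Finset.Icc 1 (n - 1), g k := by
    apply Finset.sum_nbij' (fun k => n - k) (fun k => n - k)
    · intro a ha; simp only [Finset.mem_Icc] at *; omega
    · intro a ha; simp only [Finset.mem_Icc] at *; omega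
    · intro a ha; simp only [Finset.mem_Icc] at *; omega
    · intro a ha; simp only [Finset.mem_Icc] at *; omega
    · intro a ha
      simp only [Finset.mem_Icc] at ha
      rw [hg]
      have h1 : n - (n - a) = a := by omega
      have h2 : n.choose (n - a) = n.choose a := Nat.choose_symm (by omega)
      simp only [h1, h2]
      ring
  have hmul : (n : ℝ) * (∑ k ∈ Finset.Icc 1 (n - 1),
      (n.choose k : ℝ) * (k : ℝ) ^ (k - 1) * ((n - k : ℕ) : ℝ) ^ (n - k - 1))
      = 2 * ((n : ℝ) ^ n - (n : ℝ) ^ (n - 1)) := by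
    rw [Finset.mul_sum]
    have hterm : ∀ k ∈ Finset.Icc 1 (n - 1),
        (n : ℝ) * ((n.choose k : ℝ) * (k : ℝ) ^ (k - 1) * ((n - k : ℕ) : ℝ) ^ (n - k - 1))
        = (n.choose k : ℝ) * (k : ℝ) ^ k * ((n - k : ℕ) : ℝ) ^ (n - k - 1) + g k := by
      intro k hk
      obtain ⟨hk1, hk2⟩ := Finset.mem_Icc.mp hk
      simp only [hg]
      have e1 : (k : ℝ) ^ k = (k : ℝ) * (k : ℝ) ^ (k - 1) := by
        rw [← pow_succ']; congr 1; omega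
      have e2 : ((n - k : ℕ) : ℝ) ^ (n - k) = ((n - k : ℕ) : ℝ) * ((n - k : ℕ) : ℝ) ^ (n - k - 1) := by
        rw [← pow_succ']; congr 1; omega
      have e3 : ((n - k : ℕ) : ℝ) = (n : ℝ) - (k : ℝ) := by
        rw [Nat.cast_sub (by omega)]
      rw [e1, e2, e3]
      ring
    rw [Finset.sum_congr rfl hterm, Finset.sum_add_distrib, hswap, hB]
    ring
  have hnn : (n : ℝ) ≠ 0 := by positivity
  have e4 : (n : ℝ) ^ n = (n : ℝ) * (n : ℝ) ^ (n - 1) := by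
    rw [← pow_succ']; congr 1; omega
  have e5 : (n : ℝ) ^ (n - 1) = (n : ℝ) * (n : ℝ) ^ (n - 2) := by
    rw [← pow_succ']; congr 1; omega
  apply mul_left_cancel₀ hnn
  rw [hmul]
  linear_combination 2 * e4 - 2 * e5

end AuxPolynomialIdentities

open PowerSeries

/-- The EGF of labelled trees, `T(z) = Σ_{n≥1} n^{n-2} z^n/n!`. -/
noncomputable def Ttree : PowerSeries ℝ :=
  PowerSeries.mk fun n => if n = 0 then 0 else (n : ℝ) ^ (n - 2) / (Nat.factorial n)

/-- The EGF of rooted labelled trees, `T^•(z) = z T'(z) = Σ_{n≥1} n^{n-1} z^n/n!`. -/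
noncomputable def Tdot : PowerSeries ℝ :=
  PowerSeries.X * PowerSeries.derivativeFun Ttree



lemma coeff_Ttree (n : ℕ) :
    (PowerSeries.coeff n) Ttree
      = if n = 0 then 0 else (n : ℝ) ^ (n - 2) / (Nat.factorial n) := by
  rw [Ttree, coeff_mk]

lemma coeff_Tdot (n : ℕ) :
    (PowerSeries.coeff n) Tdot = if n = 0 then 0 else (n : ℝ) ^ (n - 1) / (Nat.factorial n) := by
  match n with
  | 0 => rw [Tdot, coeff_zero_X_mul]; simp
  | (m+1) =>
    rw [Tdot, coeff_succ_X_mul]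
    show (PowerSeries.coeff m) (PowerSeries.derivative ℝ Ttree) = _
    rw [coeff_derivativeFun, coeff_Ttree]
    simp only [Nat.succ_ne_zero, if_false]
    match m with
    | 0 => norm_num
    | (l+1) =>
      have hfac : (Nat.factorial (l+2) : ℝ) ≠ 0 := by positivity
      field_simp
      push_cast
      ring

/-- Dissymmetry theorem for trees: `T^•(z) − (1/2)(T^•(z))² = T(z)`. -/
theorem stmt_3 : Tdot - (1 / 2 : ℝ) • (Tdot ^ 2) = Ttree := by
  ext n
  rw [map_sub, PowerSeries.coeff_smul, coeff_Ttree, coeff_Tdot]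
  match n with
  | 0 =>
    simp [pow_two, coeff_mul, Tdot]
  | (n+1) =>
    set N := n + 1 with hN
    clear_value N
    have hN1 : 1 ≤ N := by omega
    have hsq : (PowerSeries.coeff N) (Tdot ^ 2)
        = ∑ k ∈ Finset.Icc 1 (N - 1),
          ((k : ℝ) ^ (k - 1) / (Nat.factorial k))
            * (((N - k : ℕ) : ℝ) ^ (N - k - 1) / (Nat.factorial (N - k))) := by
      rw [pow_two, coeff_mul, Finset.Nat.sum_antidiagonal_eq_sum_range_succ_mk]
      have hsub : Finset.Icc 1 (N - 1) ⊆ Finset.range (N + 1) := by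
        intro x hx
        simp only [Finset.mem_Icc] at hx
        simp only [Finset.mem_range]
        omega
      have hvan : ∀ x ∈ Finset.range (N + 1), x ∉ Finset.Icc 1 (N - 1) →
          (PowerSeries.coeff x) Tdot * (PowerSeries.coeff (N - x)) Tdot = 0 := by
        intro x hx hnx
        simp only [Finset.mem_Icc, not_and, not_le] at hnx
        simp only [Finset.mem_range] at hx
        rw [coeff_Tdot, coeff_Tdot]
        rcases (by omega : x = 0 ∨ x = N) with h | h
        · rw [if_pos h, zero_mul]
        · rw [if_neg (by omega), if_pos (by omega), mul_zero]
      rw [← Finset.sum_subset hsub hvan]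
      refine Finset.sum_congr rfl (fun k hk => ?_)
      obtain ⟨hk1, hk2⟩ := Finset.mem_Icc.mp hk
      rw [coeff_Tdot, coeff_Tdot]
      rw [if_neg (by omega), if_neg (by omega)]
    rw [hsq]
    have hterm : ∀ k ∈ Finset.Icc 1 (N - 1),
        ((k : ℝ) ^ (k - 1) / (Nat.factorial k))
          * (((N - k : ℕ) : ℝ) ^ (N - k - 1) / (Nat.factorial (N - k)))
        = (N.choose k : ℝ) * (k : ℝ) ^ (k - 1) * ((N - k : ℕ) : ℝ) ^ (N - k - 1)
            / (Nat.factorial N) := by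
      intro k hk
      obtain ⟨hk1, hk2⟩ := Finset.mem_Icc.mp hk
      rw [Nat.cast_choose ℝ (by omega : k ≤ N)]
      have h1 : (Nat.factorial k : ℝ) ≠ 0 := by positivity
      have h2 : (Nat.factorial (N - k) : ℝ) ≠ 0 := by positivity
      have h3 : (Nat.factorial N : ℝ) ≠ 0 := by positivity
      field_simp
    rw [Finset.sum_congr rfl hterm, ← Finset.sum_div]
    rw [if_neg (by omega), if_neg (by omega)]
    have h3 : (Nat.factorial N : ℝ) ≠ 0 := by positivity
    rw [smul_eq_mul]
    by_cases hN2 : 2 ≤ N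
    · rw [Skey N hN2]
      field_simp
      ring
    · have : N = 1 := by omega
      subst this
      norm_num
end

section
/- For 0 ≤ s < 1, the function T_1(z) = z + Σ_{n≥1} n^n z^{n+1}/(n+1)! satisfies T_1(s·e^{−s}) = 1 − e^{−s}. -/
/-- `T_1(z) = z + Σ_{n≥1} n^n z^{n+1}/(n+1)!`, as a function of a real variable. -/
noncomputable def Tone (z : ℝ) : ℝ :=
  z + ∑' n : ℕ, ((n : ℝ) + 1) ^ (n + 1) * z ^ (n + 2) / (Nat.factorial (n + 2))

open Finset Real

open fwdDiff

lemma fwdDiff_iter_pow_eq_zero : ∀ j : ℕ, ∀ n : ℕ, j < n → ∀ c : ℝ,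
    (fwdDiff (1:ℝ))^[n] (fun x : ℝ => (x+c)^j) = 0 := by
  intro j
  induction j using Nat.strong_induction_on with
  | _ j IH =>
    intro n hn c
    obtain ⟨m, rfl⟩ : ∃ m, n = m + 1 := ⟨n - 1, by omega⟩
    rw [Function.iterate_succ_apply]
    have hΔ : fwdDiff (1:ℝ) (fun x : ℝ => (x+c)^j)
        = ∑ i ∈ range j, fun x : ℝ => (j.choose i : ℝ) * (x+c)^i := by
      ext x
      simp only [fwdDiff, Finset.sum_apply]
      have : (x + 1 + c) = (x + c) + 1 := by ring
      rw [this, add_pow, Finset.sum_range_succ]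
      simp [Finset.mul_sum, mul_comm]
    rw [hΔ, fwdDiff_iter_finset_sum]
    refine Finset.sum_eq_zero fun i hi => ?_
    have hi' : i < j := Finset.mem_range.mp hi
    have : (fun x : ℝ => (j.choose i : ℝ) * (x+c)^i)
        = (j.choose i : ℝ) • (fun x : ℝ => (x+c)^i) := by
      ext x; simp [smul_eq_mul]
    rw [this, fwdDiff_iter_const_smul, IH i hi' m (by omega) c, smul_zero]

lemma altsum (n j : ℕ) (hj : j < n) (c : ℝ) :
    ∑ k ∈ range (n+1), (-1:ℝ)^k * (n.choose k : ℝ) * ((k:ℝ)+c)^j = 0 := by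
  have h0 := fwdDiff_iter_pow_eq_zero j n hj c
  have h1 := fwdDiff_iter_eq_sum_shift (1:ℝ) (fun x : ℝ => (x+c)^j) n 0
  rw [h0] at h1
  have h2 : (0:ℝ) = ∑ k ∈ range (n+1), (-1:ℝ)^(n-k) * (n.choose k : ℝ) * ((k:ℝ)+c)^j := by
    simpa [zsmul_eq_mul, mul_assoc] using h1
  have h3 : ∑ k ∈ range (n+1), (-1:ℝ)^k * (n.choose k : ℝ) * ((k:ℝ)+c)^j
      = (-1:ℝ)^n * ∑ k ∈ range (n+1), (-1:ℝ)^(n-k) * (n.choose k : ℝ) * ((k:ℝ)+c)^j := by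
    rw [Finset.mul_sum]
    refine Finset.sum_congr rfl fun k hk => ?_
    have hk' : k ≤ n := by have := Finset.mem_range.mp hk; omega
    have e1 : (-1:ℝ)^(n-k) * (-1:ℝ)^k = (-1:ℝ)^n := by rw [← pow_add]; congr 1; omega
    have e3 : (-1:ℝ)^(n-k) * (-1:ℝ)^(n-k) = 1 := by
      rw [← pow_add]; exact Even.neg_one_pow ⟨n-k, rfl⟩
    have e2 : (-1:ℝ)^k = (-1:ℝ)^n * (-1:ℝ)^(n-k) := by
      rw [← e1, mul_comm ((-1:ℝ)^(n-k)), mul_assoc, e3, mul_one]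
    rw [e2]; ring
  rw [h3, ← h2, mul_zero]

noncomputable def Bfun (n : ℕ) (y : ℝ) : ℝ :=
  ∑ i ∈ range n, (n.choose (i+1) : ℝ) * (i:ℝ)^i * (y + ((n-1-i : ℕ) : ℝ))^(n-1-i)

lemma Bval : ∀ n : ℕ, 1 ≤ n → ∀ y : ℝ, Bfun n y = (y+n)^n - (y+n-1)^n := by
  intro n hn
  induction n, hn using Nat.le_induction with
  | base =>
    intro y
    simp [Bfun]
  | succ n hn IH =>
    -- the function g is constant with value 0
    set g : ℝ → ℝ := fun y => Bfun (n+1) y - ((y+(n+1:ℕ))^(n+1) - (y+(n+1:ℕ)-1)^(n+1)) with hg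
    have hderiv : ∀ y : ℝ, HasDerivAt g 0 y := by
      intro y
      have hB : HasDerivAt (Bfun (n+1))
          (∑ i ∈ range (n+1), (((n+1).choose (i+1) : ℝ) * (i:ℝ)^i) *
            (((n-i : ℕ) : ℝ) * (y + ((n-i : ℕ) : ℝ))^(n-i-1))) y := by
        have : ∀ i ∈ range (n+1), HasDerivAt (fun y : ℝ =>
            ((n+1).choose (i+1) : ℝ) * (i:ℝ)^i * (y + ((n+1-1-i : ℕ) : ℝ))^(n+1-1-i))
            ((((n+1).choose (i+1) : ℝ) * (i:ℝ)^i) *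
              (((n-i : ℕ) : ℝ) * (y + ((n-i : ℕ) : ℝ))^(n-i-1))) y := by
          intro i _
          have h1 : n+1-1-i = n-i := by omega
          rw [h1]
          have h0 := (((hasDerivAt_id y).add_const (((n-i:ℕ):ℝ))).pow (n-i)).const_mul
            (((n+1).choose (i+1) : ℝ) * (i:ℝ)^i)
          simpa using h0
        exact HasDerivAt.fun_sum this
      have hR : HasDerivAt (fun y : ℝ => (y+(n+1:ℕ))^(n+1) - (y+(n+1:ℕ)-1)^(n+1))
          (((n+1:ℕ):ℝ) * (y+(n+1:ℕ))^n - ((n+1:ℕ):ℝ) * (y+(n+1:ℕ)-1)^n) y := by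
        have p1 : HasDerivAt (fun y : ℝ => (y+(n+1:ℕ))^(n+1))
            (((n+1:ℕ):ℝ) * (y+(n+1:ℕ))^n) y := by
          have := ((hasDerivAt_id y).add_const (((n+1:ℕ)):ℝ)).fun_pow (n+1)
          simpa using this
        have p2 : HasDerivAt (fun y : ℝ => (y+(n+1:ℕ)-1)^(n+1))
            (((n+1:ℕ):ℝ) * (y+(n+1:ℕ)-1)^n) y := by
          have h2 := (hasDerivAt_id y).add_const ((((n+1:ℕ)):ℝ) - 1)
          simp only [← add_sub_assoc] at h2
          have h3 := h2.fun_pow (n+1)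
          simpa only [Nat.add_sub_cancel, mul_one, id] using h3
        exact p1.sub p2
      have hsum : (∑ i ∈ range (n+1), (((n+1).choose (i+1) : ℝ) * (i:ℝ)^i) *
            (((n-i : ℕ) : ℝ) * (y + ((n-i : ℕ) : ℝ))^(n-i-1)))
          = ((n+1:ℕ):ℝ) * (y+(n+1:ℕ))^n - ((n+1:ℕ):ℝ) * (y+(n+1:ℕ)-1)^n := by
        rw [Finset.sum_range_succ]
        simp only [Nat.sub_self, Nat.cast_zero, zero_mul, mul_zero, add_zero]
        have hIH := IH (y+1)
        have hterm : ∀ i ∈ range n, (((n+1).choose (i+1) : ℝ) * (i:ℝ)^i) *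
            (((n-i : ℕ) : ℝ) * (y + ((n-i : ℕ) : ℝ))^(n-i-1))
            = ((n+1:ℕ):ℝ) * ((n.choose (i+1) : ℝ) * (i:ℝ)^i *
                ((y+1) + ((n-1-i : ℕ) : ℝ))^(n-1-i)) := by
          intro i hi
          have hi' : i < n := Finset.mem_range.mp hi
          have hc : ((n+1).choose (i+1)) * (n-i) = (n+1) * (n.choose (i+1)) := by
            have h1 : (n+1).choose (i+1) = (n+1).choose (n-i) := by
              have h := Nat.choose_symm (show i+1 ≤ n+1 by omega)
              rw [show n+1-(i+1) = n-i from by omega] at h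
              exact h.symm
            have h2 : (n+1) * (n.choose (n-i-1)) = (n+1).choose (n-i) * (n-i) := by
              have h := Nat.add_one_mul_choose_eq n (n-i-1)
              rw [show n-i-1+1 = n-i from by omega] at h
              exact h
            have h3 : n.choose (n-i-1) = n.choose (i+1) := by
              have h := Nat.choose_symm (show i+1 ≤ n by omega)
              rw [show n-(i+1) = n-i-1 from by omega] at h
              exact h
            rw [h1, ← h3, ← h2]
          have hb : (y + ((n-i : ℕ) : ℝ)) = ((y+1) + ((n-1-i : ℕ) : ℝ)) := by
            have : (n-i : ℕ) = (n-1-i) + 1 := by omega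
            rw [this]
            push_cast
            ring
          have he : n-i-1 = n-1-i := by omega
          rw [hb, he]
          have hcR : (((n+1).choose (i+1) : ℝ)) * ((n-i : ℕ) : ℝ)
              = ((n+1:ℕ):ℝ) * (n.choose (i+1) : ℝ) := by
            exact_mod_cast congrArg (Nat.cast : ℕ → ℝ) hc
          calc (((n+1).choose (i+1) : ℝ) * (i:ℝ)^i) *
              (((n-i : ℕ) : ℝ) * (((y+1) + ((n-1-i : ℕ) : ℝ)))^(n-1-i))
              = (((n+1).choose (i+1) : ℝ) * ((n-i : ℕ) : ℝ)) * ((i:ℝ)^i *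
                (((y+1) + ((n-1-i : ℕ) : ℝ)))^(n-1-i)) := by ring
            _ = (((n+1:ℕ):ℝ) * (n.choose (i+1) : ℝ)) * ((i:ℝ)^i *
                (((y+1) + ((n-1-i : ℕ) : ℝ)))^(n-1-i)) := by rw [hcR]
            _ = _ := by ring
        rw [Finset.sum_congr rfl hterm, ← Finset.mul_sum]
        have : ∑ i ∈ range n, (n.choose (i+1) : ℝ) * (i:ℝ)^i *
            ((y+1) + ((n-1-i : ℕ) : ℝ))^(n-1-i) = Bfun n (y+1) := rfl
        rw [this, hIH]
        push_cast
        ring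
      rw [hg]
      have := hB.fun_sub hR
      rw [hsum] at this
      simpa using this
    have hconst : ∀ y : ℝ, g y = g (-(n:ℝ)) := by
      intro y
      exact is_const_of_deriv_eq_zero (fun x => (hderiv x).differentiableAt)
        (fun x => (hderiv x).deriv) y (-(n:ℝ))
    have hzero : g (-(n:ℝ)) = 0 := by
      have hBv : Bfun (n+1) (-(n:ℝ)) = 1 := by
        have halt := altsum (n+1) n (by omega) (-1)
        rw [Finset.sum_range_succ' _ (n+1)] at halt
        simp only [Nat.cast_zero, pow_zero, one_mul, Nat.choose_zero_right, Nat.cast_one,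
          zero_add] at halt
        have hc2 : ∀ k ∈ range (n+1), (-1:ℝ)^(k+1) * (((n+1).choose (k+1) : ℕ) : ℝ)
            * ((((k+1:ℕ)):ℝ) + -1)^n
            = (-1:ℝ)^(k+1) * (((n+1).choose (k+1) : ℕ) : ℝ) * ((k:ℝ))^n := by
          intro k _
          push_cast
          norm_num
        rw [Finset.sum_congr rfl hc2] at halt
        have halt2 : ∑ i ∈ range (n+1), (-1:ℝ)^(i+1) * (((n+1).choose (i+1) : ℕ) : ℝ) * ((i:ℝ))^n
            = -(-1:ℝ)^n := by linarith
        rw [Bfun]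
        have hterm2 : ∀ i ∈ range (n+1),
            (((n+1).choose (i+1) : ℕ) : ℝ) * (i:ℝ)^i * ((-(n:ℝ)) + ((n+1-1-i : ℕ) : ℝ))^(n+1-1-i)
            = (-1:ℝ)^n * ((-1:ℝ)^(i+1) * (((n+1).choose (i+1) : ℕ) : ℝ) * ((i:ℝ))^n) * (-1) := by
          intro i hi
          have hi' : i < n+1 := Finset.mem_range.mp hi
          have h1 : n+1-1-i = n-i := by omega
          have h2 : ((n-i : ℕ) : ℝ) = (n:ℝ) - (i:ℝ) := by
            rw [Nat.cast_sub (by omega)]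
          have h3 : (-(n:ℝ)) + ((n:ℝ) - (i:ℝ)) = -(i:ℝ) := by ring
          rw [h1, h2, h3, neg_pow]
          have h5 : (i:ℝ)^i * (i:ℝ)^(n-i) = (i:ℝ)^n := by
            rw [← pow_add]
            congr 1
            omega
          have hpar : (-1:ℝ)^(n+i) = (-1:ℝ)^(n-i) := by
            rw [show n+i = (n-i)+2*i from by omega, pow_add, pow_mul]
            norm_num
          calc (((n+1).choose (i+1) : ℕ) : ℝ) * (i:ℝ)^i * ((-1:ℝ)^(n-i) * (i:ℝ)^(n-i))
              = (-1:ℝ)^(n-i) * ((((n+1).choose (i+1) : ℕ) : ℝ) * ((i:ℝ)^i * (i:ℝ)^(n-i))) := by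
                ring
            _ = (-1:ℝ)^(n-i) * ((((n+1).choose (i+1) : ℕ) : ℝ) * (i:ℝ)^n) := by rw [h5]
            _ = (-1:ℝ)^(n+i) * ((((n+1).choose (i+1) : ℕ) : ℝ) * (i:ℝ)^n) := by rw [hpar]
            _ = _ := by rw [pow_add]; ring
        rw [Finset.sum_congr rfl hterm2, ← Finset.sum_mul, ← Finset.mul_sum, halt2]
        have hs : (-1:ℝ)^n * (-1:ℝ)^n = 1 := by
          rw [← pow_add]
          exact Even.neg_one_pow ⟨n, rfl⟩
        linear_combination hs
      simp only [hg]
      rw [hBv]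
      have e1 : (-(n:ℝ) + ((n+1:ℕ):ℝ)) = 1 := by push_cast; ring
      rw [e1]
      norm_num
    intro y
    have := hconst y
    rw [hzero] at this
    rw [hg] at this
    simp only [sub_eq_zero] at this
    exact this

lemma keyid (j : ℕ) :
    ∑ i ∈ range (j+1), (i:ℝ)^i * (-((i:ℝ)+1))^(j-i)
        / (((i+1).factorial : ℝ) * ((j-i).factorial : ℝ))
      = (-1:ℝ)^j / ((j+1).factorial : ℝ) := by
  have hB := Bval (j+1) (by omega) (-((j+1:ℕ):ℝ))
  have hL : Bfun (j+1) (-((j+1:ℕ):ℝ))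
      = ∑ i ∈ range (j+1), ((j+1).choose (i+1) : ℝ) * ((i:ℝ)^i * (-((i:ℝ)+1))^(j-i)) := by
    rw [Bfun]
    refine Finset.sum_congr rfl fun i hi => ?_
    have hi' : i < j+1 := Finset.mem_range.mp hi
    have h1 : j+1-1-i = j-i := by omega
    have h2 : (-((j+1:ℕ):ℝ) + ((j-i:ℕ):ℝ)) = -((i:ℝ)+1) := by
      rw [Nat.cast_sub (by omega)]
      push_cast
      ring
    rw [h1, h2]
    ring
  have hR : (-((j+1:ℕ):ℝ) + ((j+1:ℕ):ℝ))^(j+1) - (-((j+1:ℕ):ℝ) + ((j+1:ℕ):ℝ) - 1)^(j+1)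
      = (-1:ℝ)^j := by
    have e0 : (-((j+1:ℕ):ℝ) + ((j+1:ℕ):ℝ)) = 0 := by ring
    rw [e0, zero_pow (Nat.succ_ne_zero j), zero_sub, zero_sub, neg_pow, pow_succ]
    norm_num
  have key : ∀ i ∈ range (j+1), (i:ℝ)^i * (-((i:ℝ)+1))^(j-i)
        / (((i+1).factorial : ℝ) * ((j-i).factorial : ℝ))
      = ((j+1).choose (i+1) : ℝ) * ((i:ℝ)^i * (-((i:ℝ)+1))^(j-i)) / ((j+1).factorial : ℝ) := by
    intro i hi
    have hi' : i < j + 1 := Finset.mem_range.mp hi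
    have hf : ((j+1).choose (i+1)) * ((i+1).factorial) * ((j-i).factorial)
        = (j+1).factorial := by
      have h := Nat.choose_mul_factorial_mul_factorial (show i+1 ≤ j+1 by omega)
      rw [show j+1-(i+1) = j-i from by omega] at h
      exact h
    have hfR : (((j+1).choose (i+1) : ℕ) : ℝ) * (((i+1).factorial : ℕ) : ℝ)
        * (((j-i).factorial : ℕ) : ℝ) = (((j+1).factorial : ℕ) : ℝ) := by
      exact_mod_cast congrArg (Nat.cast : ℕ → ℝ) hf
    rw [div_eq_div_iff
      (by positivity)
      (by exact_mod_cast Nat.cast_ne_zero.mpr (Nat.factorial_ne_zero (j+1))), ← hfR]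
    ring
  rw [Finset.sum_congr rfl key, ← Finset.sum_div, ← hL, hB, hR]

open scoped ENNReal NNReal Topology

noncomputable def Tcoef : ℕ → ℝ := fun n =>
  if n = 0 then 0 else ((n-1 : ℕ):ℝ)^(n-1) / (n.factorial : ℝ)

lemma hasSum_exp (x : ℝ) : HasSum (fun k => x^k / (k.factorial : ℝ)) (Real.exp x) := by
  have h := (Real.summable_pow_div_factorial x).hasSum
  have he : Real.exp x = ∑' k : ℕ, x^k / (k.factorial : ℝ) := by
    rw [Real.exp_eq_exp_ℝ, NormedSpace.exp_eq_tsum_div]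
  rwa [← he] at h

lemma pow_self_le (m : ℕ) : (m:ℝ)^m ≤ Real.exp m * (m.factorial : ℝ) := by
  have h := Summable.le_tsum (Real.summable_pow_div_factorial (m:ℝ)) m (fun k _ => by positivity)
  rw [(hasSum_exp (m:ℝ)).tsum_eq] at h
  have hf : (0:ℝ) < (m.factorial : ℝ) := by exact_mod_cast m.factorial_pos
  rw [div_le_iff₀ hf] at h
  linarith

lemma Tcoef_le (n : ℕ) : |Tcoef n| ≤ Real.exp 1 ^ n := by
  cases n with
  | zero => simp [Tcoef]
  | succ m =>
    have hnn : (0:ℝ) ≤ ((m:ℕ):ℝ)^m / ((m+1).factorial : ℝ) := by positivity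
    have : Tcoef (m+1) = ((m:ℕ):ℝ)^m / ((m+1).factorial : ℝ) := by
      simp [Tcoef]
    rw [this, abs_of_nonneg hnn]
    have hf : (0:ℝ) < ((m+1).factorial : ℝ) := by exact_mod_cast (m+1).factorial_pos
    rw [div_le_iff₀ hf]
    have h1 := pow_self_le m
    have h2 : Real.exp m ≤ Real.exp 1 ^ (m+1) := by
      rw [show Real.exp (m:ℝ) = Real.exp 1 ^ m by rw [← Real.exp_nat_mul]; norm_num]
      exact pow_le_pow_right₀ (by nlinarith [Real.add_one_le_exp (1:ℝ)]) (by omega)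
    have h3 : (m.factorial : ℝ) ≤ ((m+1).factorial : ℝ) := by
      exact_mod_cast Nat.factorial_le (by omega)
    nlinarith [Real.exp_pos (m:ℝ), m.factorial_pos, pow_nonneg (le_of_lt (Real.exp_pos 1)) (m+1)]

lemma summable_coef_abs {r : ℝ} (h0 : 0 ≤ r) (h1 : r * Real.exp 1 < 1) :
    Summable (fun n => |Tcoef n| * r^n) := by
  refine Summable.of_nonneg_of_le (fun n => by positivity) (fun n => ?_)
    (summable_geometric_of_lt_one (by positivity) h1 : Summable fun n => (r * Real.exp 1)^n)
  calc |Tcoef n| * r^n ≤ Real.exp 1 ^ n * r^n :=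
        mul_le_mul_of_nonneg_right (Tcoef_le n) (pow_nonneg h0 n)
    _ = (r * Real.exp 1)^n := by rw [mul_pow]; ring

lemma summable_coef_mul {z : ℝ} (hz : |z| * Real.exp 1 < 1) :
    Summable (fun n => Tcoef n * z^n) := by
  apply Summable.of_abs
  have := summable_coef_abs (abs_nonneg z) hz
  simpa [abs_mul, abs_pow] using this

lemma Tone_eq (z : ℝ) (hz : |z| * Real.exp 1 < 1) : Tone z = ∑' n, Tcoef n * z^n := by
  have hs : Summable (fun n => Tcoef n * z^n) := summable_coef_mul hz
  have hs1 : Summable (fun n => Tcoef (n+1) * z^(n+1)) :=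
    (summable_nat_add_iff 1).mpr hs
  rw [Summable.tsum_eq_zero_add hs, Summable.tsum_eq_zero_add hs1]
  have h0 : Tcoef 0 * z^0 = 0 := by simp [Tcoef]
  have h1 : Tcoef 1 * z^1 = z := by simp [Tcoef]
  rw [h0, h1, zero_add, Tone]
  congr 1
  apply tsum_congr
  intro n
  have : Tcoef (n+2) = ((n+1 : ℕ):ℝ)^(n+1) / ((n+2).factorial : ℝ) := by
    simp [Tcoef]
  rw [this]
  push_cast
  ring

noncomputable def Tseries : FormalMultilinearSeries ℝ ℝ ℝ :=
  FormalMultilinearSeries.ofScalars ℝ Tcoef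

lemma Tseries_radius : ENNReal.ofReal (Real.exp 1)⁻¹ ≤ Tseries.radius := by
  apply ENNReal.le_of_forall_nnreal_lt
  intro r hr
  have hr' : (r:ℝ) < (Real.exp 1)⁻¹ := by
    rw [ENNReal.ofReal, ENNReal.coe_lt_coe] at hr
    calc (r:ℝ) < (((Real.exp 1)⁻¹).toNNReal : ℝ) := NNReal.coe_lt_coe.mpr hr
      _ = (Real.exp 1)⁻¹ := by rw [Real.coe_toNNReal _ (by positivity)]
  have h1 : (r:ℝ) * Real.exp 1 < 1 := by
    have := mul_lt_mul_of_pos_right hr' (Real.exp_pos 1)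
    rwa [inv_mul_cancel₀ (ne_of_gt (Real.exp_pos 1))] at this
  apply Tseries.le_radius_of_summable_norm
  have hfun : (fun n => ‖Tseries n‖ * (r:ℝ)^n) = fun n => |Tcoef n| * (r:ℝ)^n := by
    funext n
    rw [Tseries, FormalMultilinearSeries.ofScalars_norm, Real.norm_eq_abs]
  rw [hfun]
  exact summable_coef_abs (r.coe_nonneg) h1

lemma Tone_analytic : AnalyticOnNhd ℝ Tone (Metric.ball (0:ℝ) (Real.exp 1)⁻¹) := by
  have hrpos : (0:ℝ≥0∞) < Tseries.radius :=
    lt_of_lt_of_le (by rw [ENNReal.ofReal_pos]; positivity) Tseries_radius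
  have h := (Tseries.hasFPowerSeriesOnBall hrpos).analyticOnNhd
  have hsub : Metric.ball (0:ℝ) (Real.exp 1)⁻¹ ⊆ EMetric.ball (0:ℝ) Tseries.radius := by
    rw [← Metric.emetric_ball]
    exact EMetric.ball_subset_ball Tseries_radius
  refine AnalyticOnNhd.congr Metric.isOpen_ball (h.mono hsub) ?_
  intro z hz
  rw [Metric.mem_ball, dist_zero_right, Real.norm_eq_abs] at hz
  have h1 : |z| * Real.exp 1 < 1 := by
    have := mul_lt_mul_of_pos_right hz (Real.exp_pos 1)
    rwa [inv_mul_cancel₀ (ne_of_gt (Real.exp_pos 1))] at this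
  have : Tseries.sum z = ∑' n, Tcoef n * z^n := by
    rw [FormalMultilinearSeries.sum]
    apply tsum_congr
    intro n
    rw [Tseries, FormalMultilinearSeries.ofScalars_apply_eq, smul_eq_mul]
  rw [this, ← Tone_eq z h1]

lemma tsum_prod_eq_tsum_antidiagonal {f : ℕ × ℕ → ℝ} (hf : Summable f) :
    ∑' p : ℕ × ℕ, f p = ∑' n, ∑ kl ∈ Finset.HasAntidiagonal.antidiagonal n, f kl := by
  conv_rhs => congr; ext; rw [← Finset.sum_finset_coe, ← tsum_fintype (L := SummationFilter.unconditional _)]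
  rw [← Finset.HasAntidiagonal.sigmaAntidiagonalEquivProd.tsum_eq f]
  exact Summable.tsum_sigma' (fun n => (hasSum_fintype _).summable)
    (Finset.HasAntidiagonal.sigmaAntidiagonalEquivProd.summable_iff.mpr hf)

lemma exp54 : Real.exp (5/4) < 4 := by
  have h4 : Real.exp (5/4) ^ (4:ℕ) = Real.exp 5 := by
    rw [← Real.exp_nat_mul]; norm_num
  have h5 : Real.exp 5 < 256 := by
    have he : Real.exp (5:ℝ) = Real.exp 1 ^ (5:ℕ) := by
      rw [← Real.exp_nat_mul]; norm_num
    rw [he]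
    calc Real.exp 1 ^ (5:ℕ) < 2.7182818286 ^ (5:ℕ) :=
          pow_lt_pow_left₀ Real.exp_one_lt_d9 (Real.exp_pos 1).le (by norm_num)
      _ < 256 := by norm_num
  have := (pow_lt_pow_iff_left₀ (Real.exp_pos (5/4)).le (by norm_num : (0:ℝ) ≤ 4)
    (by norm_num : (4:ℕ) ≠ 0)).mp
  apply this
  rw [h4]
  norm_num [h5]

lemma core_eq (s : ℝ) (h0 : 0 ≤ s) (h4 : s ≤ 4⁻¹) :
    Tone (s * Real.exp (-s)) = 1 - Real.exp (-s) := by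
  set t : ℕ × ℕ → ℝ := fun p =>
    ((p.1:ℝ)^p.1 / ((p.1+1).factorial : ℝ)) * s^(p.1+1)
      * ((-(((p.1:ℝ)+1) * s))^p.2 / (p.2.factorial : ℝ)) with ht
  have hrow : ∀ m : ℕ, HasSum (fun k => t (m, k))
      (((m:ℝ)^m / ((m+1).factorial : ℝ)) * s^(m+1) * Real.exp (-(((m:ℝ)+1) * s))) := by
    intro m
    exact (hasSum_exp (-(((m:ℝ)+1) * s))).mul_left
      (((m:ℝ)^m / ((m+1).factorial : ℝ)) * s^(m+1))
  have habs_row : ∀ m : ℕ, HasSum (fun k => |t (m, k)|)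
      (((m:ℝ)^m / ((m+1).factorial : ℝ)) * s^(m+1) * Real.exp ((((m:ℝ)+1) * s))) := by
    intro m
    have h := (hasSum_exp ((((m:ℝ)+1) * s))).mul_left
      (((m:ℝ)^m / ((m+1).factorial : ℝ)) * s^(m+1))
    have hfe : (fun k => |t (m, k)|) = fun k => (((m:ℝ)^m / ((m+1).factorial : ℝ)) * s^(m+1))
        * ((((m:ℝ)+1) * s)^k / (k.factorial : ℝ)) := by
      funext k
      show |((m:ℝ)^m / ((m+1).factorial : ℝ)) * s^(m+1)
        * ((-(((m:ℝ)+1) * s))^k / ((k.factorial : ℕ) : ℝ))| = _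
      rw [abs_mul, abs_mul,
        abs_of_nonneg (show (0:ℝ) ≤ (m:ℝ)^m / ((m+1).factorial : ℝ) by positivity),
        abs_of_nonneg (show (0:ℝ) ≤ s^(m+1) by positivity),
        abs_div, abs_pow, abs_neg,
        abs_of_nonneg (show (0:ℝ) ≤ ((m:ℝ)+1) * s by positivity),
        abs_of_nonneg (show (0:ℝ) ≤ ((k.factorial : ℕ) : ℝ) by positivity)]
    rw [hfe]
    exact h
  have hq0 : (0:ℝ) ≤ s * Real.exp s * Real.exp 1 := by positivity
  have hq1 : s * Real.exp s * Real.exp 1 < 1 := by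
    have hs4 : Real.exp s ≤ Real.exp 4⁻¹ := Real.exp_le_exp.mpr h4
    have step1 : s * Real.exp s ≤ 4⁻¹ * Real.exp 4⁻¹ :=
      mul_le_mul h4 hs4 (Real.exp_pos s).le (by norm_num)
    have step2 : s * Real.exp s * Real.exp 1 ≤ 4⁻¹ * (Real.exp 4⁻¹ * Real.exp 1) := by
      nlinarith [Real.exp_pos 1]
    have step3 : Real.exp 4⁻¹ * Real.exp 1 = Real.exp (5/4) := by
      rw [← Real.exp_add]; norm_num
    rw [step3] at step2
    nlinarith [exp54]
  have hrowsum_le : ∀ m : ℕ, ((m:ℝ)^m / ((m+1).factorial:ℝ)) * s^(m+1) * Real.exp ((((m:ℝ)+1))*s)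
      ≤ (s * Real.exp s) * (s * Real.exp s * Real.exp 1)^m := by
    intro m
    have e1 : Real.exp (((m:ℝ)+1)*s) = Real.exp s ^ (m+1) := by
      rw [← Real.exp_nat_mul]
      push_cast
      ring_nf
    have hf : (0:ℝ) < ((m+1).factorial : ℝ) := by exact_mod_cast (m+1).factorial_pos
    have e2 : (m:ℝ)^m / ((m+1).factorial:ℝ) ≤ Real.exp 1 ^ m := by
      rw [div_le_iff₀ hf]
      have h1 := pow_self_le m
      have h2 : Real.exp (m:ℝ) = Real.exp 1 ^ m := by rw [← Real.exp_nat_mul]; norm_num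
      have h3 : (m.factorial : ℝ) ≤ ((m+1).factorial : ℝ) := by
        exact_mod_cast Nat.factorial_le (by omega)
      nlinarith [pow_nonneg (Real.exp_pos 1).le m, m.factorial_pos,
        Real.exp_pos (m:ℝ), h1, h2.symm.le, h2.le]
    calc ((m:ℝ)^m / ((m+1).factorial:ℝ)) * s^(m+1) * Real.exp ((((m:ℝ)+1))*s)
        ≤ Real.exp 1 ^ m * (s^(m+1) * Real.exp s ^ (m+1)) := by
          rw [e1]
          have hnn : (0:ℝ) ≤ s^(m+1) * Real.exp s ^ (m+1) := by positivity
          nlinarith [e2, hnn, mul_le_mul_of_nonneg_right e2 hnn]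
      _ = (s * Real.exp s) * (s * Real.exp s * Real.exp 1)^m := by
          rw [mul_pow, mul_pow]
          ring
  have hrowsum_summable : Summable (fun m : ℕ => ((m:ℝ)^m / ((m+1).factorial:ℝ)) * s^(m+1)
      * Real.exp ((((m:ℝ)+1))*s)) :=
    Summable.of_nonneg_of_le (fun m => by positivity) hrowsum_le
      ((summable_geometric_of_lt_one hq0 hq1).mul_left _)
  have habs : Summable (fun p : ℕ × ℕ => |t p|) := by
    rw [summable_prod_of_nonneg (fun p => abs_nonneg _)]
    refine ⟨fun m => (habs_row m).summable, ?_⟩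
    have heq : (fun m => ∑' k, |t (m,k)|) = fun m : ℕ => ((m:ℝ)^m / ((m+1).factorial:ℝ)) * s^(m+1)
        * Real.exp ((((m:ℝ)+1))*s) := funext fun m => (habs_row m).tsum_eq
    rw [heq]
    exact hrowsum_summable
  have hst : Summable t := habs.of_abs
  have hze : |s * Real.exp (-s)| * Real.exp 1 < 1 := by
    have he1 : Real.exp (-s) ≤ 1 := Real.exp_le_one_iff.mpr (by linarith)
    have hzn : |s * Real.exp (-s)| = s * Real.exp (-s) := abs_of_nonneg (by positivity)
    rw [hzn]
    have hz4 : s * Real.exp (-s) ≤ 4⁻¹ := by nlinarith [Real.exp_pos (-s)]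
    nlinarith [Real.exp_pos 1, Real.exp_one_lt_d9, Real.exp_pos (-s),
      mul_pos (Real.exp_pos (-s)) (Real.exp_pos 1)]
  have hmain : ∑' p : ℕ × ℕ, t p = Tone (s * Real.exp (-s)) := by
    rw [Summable.tsum_prod' hst (fun m => (hrow m).summable)]
    rw [Tone_eq (s * Real.exp (-s)) hze, Summable.tsum_eq_zero_add (summable_coef_mul hze)]
    have hTc0 : Tcoef 0 * (s * Real.exp (-s))^0 = 0 := by simp [Tcoef]
    rw [hTc0, zero_add]
    apply tsum_congr
    intro m
    rw [(hrow m).tsum_eq]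
    have hTm : Tcoef (m+1) = (m:ℝ)^m / ((m+1).factorial : ℝ) := by simp [Tcoef]
    have hzp : (s * Real.exp (-s))^(m+1) = s^(m+1) * Real.exp (-(((m:ℝ)+1) * s)) := by
      rw [mul_pow]
      congr 1
      rw [← Real.exp_nat_mul]
      congr 1
      push_cast
      ring
    rw [hTm, hzp]
    ring
  have hdiag : ∑' p : ℕ × ℕ, t p = 1 - Real.exp (-s) := by
    rw [tsum_prod_eq_tsum_antidiagonal hst]
    have hj : ∀ j : ℕ, ∑ kl ∈ Finset.HasAntidiagonal.antidiagonal j, t kl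
        = (-1:ℝ)^j * s^(j+1) / ((j+1).factorial : ℝ) := by
      intro j
      rw [Finset.Nat.sum_antidiagonal_eq_sum_range_succ_mk]
      have hterm : ∀ i ∈ range (j+1), t (i, j-i)
          = ((i:ℝ)^i * (-((i:ℝ)+1))^(j-i)
              / (((i+1).factorial:ℝ) * ((j-i).factorial:ℝ))) * s^(j+1) := by
        intro i hi
        have hi' : i < j+1 := mem_range.mp hi
        rw [ht]
        have e1 : (-(((i:ℝ)+1) * s))^(j-i) = (-((i:ℝ)+1))^(j-i) * s^(j-i) := by
          rw [← neg_mul, mul_pow]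
        have e2 : s^(i+1) * s^(j-i) = s^(j+1) := by
          rw [← pow_add]
          congr 1
          omega
        calc ((i:ℝ)^i / ((i+1).factorial : ℝ)) * s^(i+1)
              * ((-(((i:ℝ)+1) * s))^(j-i) / ((j-i).factorial : ℝ))
            = ((i:ℝ)^i * (-((i:ℝ)+1))^(j-i)
                / (((i+1).factorial:ℝ) * ((j-i).factorial:ℝ))) * (s^(i+1) * s^(j-i)) := by
              rw [e1]
              ring
          _ = _ := by rw [e2]
      rw [Finset.sum_congr rfl hterm, ← Finset.sum_mul, keyid j]
      ring
    rw [tsum_congr hj]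
    have hexp := hasSum_exp (-s)
    have h1 : (-s)^0/((Nat.factorial 0 : ℕ):ℝ) + ∑' j:ℕ, (-s)^(j+1)/(((j+1).factorial:ℕ):ℝ)
        = Real.exp (-s) := by
      rw [← Summable.tsum_eq_zero_add hexp.summable]
      exact hexp.tsum_eq
    simp only [pow_zero, Nat.factorial_zero, Nat.cast_one, div_one] at h1
    have h2 : ∀ j:ℕ, (-1:ℝ)^j * s^(j+1)/((j+1).factorial:ℝ)
        = -((-s)^(j+1)/(((j+1).factorial:ℕ):ℝ)) := by
      intro j
      rw [neg_pow, pow_succ]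
      ring
    rw [tsum_congr h2, tsum_neg]
    linarith
  rw [← hmain, hdiag]

/-- For `0 ≤ s < 1`, `T_1(s·e^{−s}) = 1 − e^{−s}`. -/
theorem stmt_12 (s : ℝ) (h0 : 0 ≤ s) (h1 : s < 1) :
    Tone (s * Real.exp (-s)) = 1 - Real.exp (-s) := by
  have hopen : IsOpen (Set.Ioo (-(8:ℝ)⁻¹) 1) := isOpen_Ioo
  have hconn : IsPreconnected (Set.Ioo (-(8:ℝ)⁻¹) 1) := isPreconnected_Ioo
  have hmem : ∀ x ∈ Set.Ioo (-(8:ℝ)⁻¹) 1,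
      x * Real.exp (-x) ∈ Metric.ball (0:ℝ) (Real.exp 1)⁻¹ := by
    intro x hx
    obtain ⟨hx1, hx2⟩ := hx
    rw [Metric.mem_ball, dist_zero_right, Real.norm_eq_abs]
    rcases le_or_gt 0 x with hx0 | hx0
    · rw [abs_of_nonneg (by positivity)]
      have hlt : x < Real.exp (x - 1) := by
        have h := Real.add_one_lt_exp (show x - 1 ≠ 0 by intro h; apply absurd hx2; simp
          [show x = 1 by linarith])
        linarith
      calc x * Real.exp (-x) < Real.exp (x-1) * Real.exp (-x) :=
            mul_lt_mul_of_pos_right hlt (Real.exp_pos _)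
        _ = Real.exp (-1) := by rw [← Real.exp_add]; ring_nf
        _ = (Real.exp 1)⁻¹ := Real.exp_neg 1
    · rw [abs_of_neg (by nlinarith [Real.exp_pos (-x)] : x * Real.exp (-x) < 0)]
      have hb1 : -x < 8⁻¹ := by linarith
      have hb2 : Real.exp (-x) < Real.exp 8⁻¹ := Real.exp_lt_exp.mpr (by linarith)
      have hrw : -(x * Real.exp (-x)) = (-x) * Real.exp (-x) := by ring
      rw [hrw]
      have hstep : (-x) * Real.exp (-x) < 8⁻¹ * Real.exp 8⁻¹ :=
        mul_lt_mul hb1 hb2.le (Real.exp_pos _) (by norm_num)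
      have hnum : (8:ℝ)⁻¹ * Real.exp 8⁻¹ < (Real.exp 1)⁻¹ := by
        have h98 : Real.exp ((8:ℝ)⁻¹) * Real.exp 1 = Real.exp (9/8) := by
          rw [← Real.exp_add]; norm_num
        have h2 : Real.exp ((9:ℝ)/8) < Real.exp 2 := Real.exp_lt_exp.mpr (by norm_num)
        have h3 : Real.exp (2:ℝ) < 8 := by
          have he : Real.exp (2:ℝ) = Real.exp 1 ^ (2:ℕ) := by rw [← Real.exp_nat_mul]; norm_num
          rw [he]
          nlinarith [Real.exp_one_lt_d9, Real.exp_pos 1]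
        have h5 : Real.exp ((8:ℝ)⁻¹) * Real.exp 1 < 8 := by rw [h98]; linarith
        have h6 : (8:ℝ)⁻¹ * Real.exp 8⁻¹ * Real.exp 1 < 1 := by nlinarith
        have h8 : Real.exp (-1) * Real.exp 1 = 1 := by rw [← Real.exp_add]; norm_num
        rw [← Real.exp_neg]
        exact (mul_lt_mul_iff_of_pos_right (Real.exp_pos 1)).mp (by rw [h8]; exact h6)
      exact hstep.trans hnum
  have hf : AnalyticOnNhd ℝ (fun x : ℝ => Tone (x * Real.exp (-x))) (Set.Ioo (-(8:ℝ)⁻¹) 1) := by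
    intro x hx
    have hphi : AnalyticAt ℝ (fun x : ℝ => x * Real.exp (-x)) x := by
      apply AnalyticAt.mul analyticAt_id
      exact analyticAt_rexp.comp analyticAt_id.neg
    have hcomp := AnalyticAt.comp (g := Tone) (f := fun y : ℝ => y * Real.exp (-y))
      (Tone_analytic _ (hmem x hx)) hphi
    exact hcomp
  have hg : AnalyticOnNhd ℝ (fun x : ℝ => 1 - Real.exp (-x)) (Set.Ioo (-(8:ℝ)⁻¹) 1) := by
    intro x hx
    exact analyticAt_const.sub (analyticAt_rexp.comp analyticAt_id.neg)
  have h8 : (8:ℝ)⁻¹ ∈ Set.Ioo (-(8:ℝ)⁻¹) 1 := by constructor <;> norm_num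
  have hev : (fun x : ℝ => Tone (x * Real.exp (-x)))
      =ᶠ[nhds (8:ℝ)⁻¹] (fun x => 1 - Real.exp (-x)) := by
    have hIoo : Set.Ioo (0:ℝ) 4⁻¹ ∈ nhds (8:ℝ)⁻¹ := Ioo_mem_nhds (by norm_num) (by norm_num)
    filter_upwards [hIoo] with x hx
    exact core_eq x hx.1.le hx.2.le
  have heq := AnalyticOnNhd.eqOn_of_preconnected_of_eventuallyEq hf hg hconn h8 hev
  exact heq (show s ∈ Set.Ioo (-(8:ℝ)⁻¹) 1 by constructor <;> [linarith; exact h1])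
end

section
/- Fix u > 0, let t ∈ (0,1) satisfy e^{−t}/(1−t) = 1+u, and set c = t·e^{−t}/u. Then c/(1 + (1/u)·T_1(u·c)) = 1 − t, where T_1(z) = z + Σ_{n≥1} n^n z^{n+1}/(n+1)!. -/
open Finset

lemma fwdDiff_poly_eval (P : Polynomial ℝ) :
    fwdDiff (1:ℝ) (fun x => P.eval x)
      = fun x => (P.comp (Polynomial.X + Polynomial.C 1) - P).eval x := by
  funext y
  simp [fwdDiff, Polynomial.eval_comp]

lemma fwdDiff_iter_poly_zero : ∀ (n : ℕ) (P : Polynomial ℝ), P.degree < n →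
    ∀ y, (fwdDiff (1:ℝ))^[n] (fun x => P.eval x) y = 0 := by
  intro n
  induction n with
  | zero =>
    intro P hP y
    have : P = 0 := by
      rw [← Polynomial.degree_eq_bot]
      exact Nat.WithBot.lt_zero_iff.mp (by simpa using hP)
    simp [this]
  | succ n ih =>
    intro P hP y
    rw [Function.iterate_succ_apply, fwdDiff_poly_eval]
    apply ih
    by_cases h0 : P.natDegree = 0
    · obtain ⟨a, rfl⟩ := Polynomial.natDegree_eq_zero.mp h0
      rw [Polynomial.C_comp, sub_self, Polynomial.degree_zero]
      exact bot_lt_iff_ne_bot.mpr (by simp)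
    · have hP0 : P ≠ 0 := fun h => h0 (by simp [h])
      have hq : (Polynomial.X + Polynomial.C (1:ℝ)).natDegree = 1 := by
        simpa using Polynomial.natDegree_X_add_C (1:ℝ)
      have hnc : (P.comp (Polynomial.X + Polynomial.C 1)).natDegree = P.natDegree := by
        rw [Polynomial.natDegree_comp, hq, mul_one]
      have hcne : P.comp (Polynomial.X + Polynomial.C 1) ≠ 0 := by
        intro h
        rw [h, Polynomial.natDegree_zero] at hnc
        exact h0 hnc.symm
      have hdc : (P.comp (Polynomial.X + Polynomial.C 1)).degree = P.degree := by
        rw [Polynomial.degree_eq_natDegree hcne, Polynomial.degree_eq_natDegree hP0, hnc]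
      have hlc : (P.comp (Polynomial.X + Polynomial.C 1)).leadingCoeff = P.leadingCoeff := by
        rw [Polynomial.leadingCoeff_comp (by rw [hq]; norm_num)]
        have h1 : (Polynomial.X + (1:Polynomial ℝ)).leadingCoeff = 1 := by
          rw [show (1:Polynomial ℝ) = Polynomial.C 1 by simp]
          exact Polynomial.leadingCoeff_X_add_C 1
        simp [h1]
      have hsub := Polynomial.degree_sub_lt hdc hcne hlc
      rw [hdc] at hsub
      refine lt_of_lt_of_le hsub ?_
      rw [Polynomial.degree_eq_natDegree hP0]
      have : P.natDegree ≤ n := by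
        have := (Polynomial.natDegree_lt_iff_degree_lt hP0).mpr hP
        omega
      exact_mod_cast Nat.cast_le.mpr this

lemma alt_sum_poly (n : ℕ) (P : Polynomial ℝ) (hP : P.degree < n) :
    ∑ k ∈ range (n+1), (-1:ℝ)^(n-k) * (n.choose k) * P.eval (k:ℝ) = 0 := by
  have H := fwdDiff_iter_eq_sum_shift (1:ℝ) (fun x => P.eval x) n 0
  rw [fwdDiff_iter_poly_zero n P hP 0] at H
  rw [H]
  apply Finset.sum_congr rfl
  intro k _
  rw [zsmul_eq_mul]
  push_cast
  norm_num



lemma hasDerivAt_pow_add (c : ℝ) (e : ℕ) (y : ℝ) :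
    HasDerivAt (fun x : ℝ => (x + c)^e) (e * (y + c)^(e-1)) y := by
  simpa using ((hasDerivAt_id y).add_const c).fun_pow e

-- the alternating-sum evaluation needed at the base point
lemma eval_base (n : ℕ) (hn : 1 ≤ n) :
    ∑ j ∈ range (n+1), ((n+1).choose (j+1) : ℝ) * (j:ℝ)^j * (-(j:ℝ))^(n-j) = 1 := by
  have hdeg : ((Polynomial.X - Polynomial.C 1 : Polynomial ℝ)^n).degree < (n+1 : ℕ) := by
    rw [Polynomial.degree_pow, Polynomial.degree_X_sub_C]
    simp only [nsmul_eq_mul, mul_one]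
    exact_mod_cast Nat.lt_succ_self n
  have H := alt_sum_poly (n+1) _ hdeg
  rw [Finset.sum_range_succ'] at H
  simp only [Polynomial.eval_pow, Polynomial.eval_sub, Polynomial.eval_X, Polynomial.eval_C] at H
  -- H : ∑ j in range (n+1), (-1)^(n+1-(j+1)) * C(n+1,j+1) * ((j+1:ℝ)-1)^n + (-1)^(n+1-0)*C(n+1,0)*((0:ℝ)-1)^n = 0
  have H2 : ∑ j ∈ range (n+1), (-1:ℝ)^(n-j) * ((n+1).choose (j+1)) * (j:ℝ)^n = 1 := by
    have e0 : ((-1:ℝ))^(n+1-0) * ((n+1).choose 0) * (((0:ℕ):ℝ)-1)^n = -1 := by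
      simp [← neg_pow, pow_succ]
    rw [e0] at H
    have : ∑ j ∈ range (n+1), (-1:ℝ)^(n+1-(j+1)) * ((n+1).choose (j+1)) * (((j+1:ℕ):ℝ)-1)^n
        = ∑ j ∈ range (n+1), (-1:ℝ)^(n-j) * ((n+1).choose (j+1)) * (j:ℝ)^n := by
      apply Finset.sum_congr rfl; intro j _
      have hidx : n + 1 - (j + 1) = n - j := by omega
      rw [hidx]
      push_cast
      ring
    rw [this] at H
    linarith
  rw [← H2]
  apply Finset.sum_congr rfl
  intro j hj
  rcases Nat.eq_zero_or_pos j with rfl | hjpos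
  · simp [zero_pow (by omega : n ≠ 0), zero_pow (by omega : n - 0 ≠ 0)]
  · have hj' : j ≤ n := Nat.lt_succ_iff.mp (mem_range.mp hj)
    have hjn : (j:ℝ)^j * (j:ℝ)^(n-j) = (j:ℝ)^n := by
      rw [← pow_add, Nat.add_sub_cancel' hj']
    rw [neg_pow, ← hjn]
    ring

lemma abel_key : ∀ n : ℕ, 1 ≤ n → ∀ y : ℝ,
    ∑ j ∈ range n, (n.choose (j+1) : ℝ) * (j : ℝ)^j * (y + ((n - 1 - j : ℕ):ℝ))^(n - 1 - j)
      = (y + n)^n - (y + n - 1)^n := by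
  intro n
  induction n with
  | zero => omega
  | succ n ih =>
    intro _ y
    rcases Nat.eq_zero_or_pos n with rfl | hn
    · simp
    have IH := ih hn
    -- the function F = LHS - RHS has zero derivative
    set L : ℝ → ℝ := fun y => ∑ j ∈ range (n+1),
        ((n+1).choose (j+1) : ℝ) * (j : ℝ)^j * (y + ((n - j : ℕ):ℝ))^(n - j) with hL
    set R : ℝ → ℝ := fun y => (y + (n+1))^(n+1) - (y + (n+1) - 1)^(n+1) with hR
    have hderiv : ∀ z : ℝ, HasDerivAt (fun x => L x - R x) 0 z := by
      intro z
      have hLd : HasDerivAt L (∑ j ∈ range (n+1),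
          ((n+1).choose (j+1) : ℝ) * (j : ℝ)^j * (((n - j : ℕ):ℝ) * (z + ((n - j : ℕ):ℝ))^(n - j - 1))) z := by
        apply HasDerivAt.fun_sum
        intro j _
        exact (hasDerivAt_pow_add ((n - j : ℕ):ℝ) (n - j) z).const_mul _
      have hRd : HasDerivAt R (((n:ℝ)+1) * (z + ((n:ℝ)+1))^n - ((n:ℝ)+1) * (z + ((n:ℝ)+1) - 1)^n) z := by
        have h1 : HasDerivAt (fun x : ℝ => (x + ((n:ℝ)+1))^(n+1)) (((n:ℝ)+1) * (z + ((n:ℝ)+1))^n) z := by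
          have hd := hasDerivAt_pow_add ((n:ℝ)+1) (n+1) z
          simp only [Nat.add_sub_cancel] at hd
          have hco : ((n:ℝ)+1) * (z + ((n:ℝ)+1))^n = ((n+1:ℕ):ℝ) * (z + ((n:ℝ)+1))^n := by
            push_cast; ring_nf
          rw [hco]
          exact hd
        have h2 : HasDerivAt (fun x : ℝ => (x + ((n:ℝ)+1) - 1)^(n+1)) (((n:ℝ)+1) * (z + ((n:ℝ)+1) - 1)^n) z := by
          have heq : (fun x : ℝ => (x + ((n:ℝ)+1) - 1)^(n+1)) = fun x : ℝ => (x + (n:ℝ))^(n+1) := by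
            funext x; ring_nf
          rw [heq]
          have hd := hasDerivAt_pow_add ((n:ℝ)) (n+1) z
          simp only [Nat.add_sub_cancel] at hd
          have hco : ((n:ℝ)+1) * (z + ((n:ℝ)+1) - 1)^n = ((n+1:ℕ):ℝ) * (z + (n:ℝ))^n := by
            push_cast; ring_nf
          rw [hco]
          exact hd
        exact h1.sub h2
      have key : (∑ j ∈ range (n+1),
          ((n+1).choose (j+1) : ℝ) * (j : ℝ)^j * (((n - j : ℕ):ℝ) * (z + ((n - j : ℕ):ℝ))^(n - j - 1)))
          = ((n+1):ℝ) * (z + (n+1))^n - ((n+1):ℝ) * (z + (n+1) - 1)^n := by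
        rw [Finset.sum_range_succ]
        simp only [Nat.sub_self, Nat.cast_zero, zero_mul, mul_zero, add_zero]
        have step : ∀ j ∈ range n,
            ((n+1).choose (j+1) : ℝ) * (j : ℝ)^j * (((n - j : ℕ):ℝ) * (z + ((n - j : ℕ):ℝ))^(n - j - 1))
            = ((n+1):ℝ) * ((n.choose (j+1) : ℝ) * (j : ℝ)^j * ((z+1) + ((n - 1 - j : ℕ):ℝ))^(n - 1 - j)) := by
          intro j hj
          have hjn : j < n := mem_range.mp hj
          have hchoose : ((n+1).choose (j+1)) * (n - j) = (n+1) * (n.choose (j+1)) := by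
            have h1 : (n+1).choose (j+2) * (j+2) = (n+1).choose (j+1) * (n - j) := by
              have h := Nat.choose_succ_right_eq (n+1) (j+1)
              rwa [show n+1-(j+1) = n - j by omega] at h
            have h2 : (n+1) * n.choose (j+1) = (n+1).choose (j+2) * (j+2) := by
              exact Nat.add_one_mul_choose_eq n (j+1)
            omega
          have hsub1 : (n - j : ℕ) = (n - 1 - j) + 1 := by omega
          have hexp : n - j - 1 = n - 1 - j := by omega
          have hbase : (z + ((n - j : ℕ):ℝ)) = (z+1) + ((n - 1 - j : ℕ):ℝ) := by
            rw [hsub1]; push_cast; ring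
          rw [hexp, hbase]
          have hcast := congrArg (fun m : ℕ => (m:ℝ)) hchoose
          push_cast at hcast
          linear_combination ((j:ℝ)^j * ((z+1) + ((n - 1 - j : ℕ):ℝ))^(n-1-j)) * hcast
        rw [Finset.sum_congr rfl step, ← Finset.mul_sum, IH (z+1)]
        push_cast
        ring
      rw [key] at hLd
      simpa using hLd.fun_sub hRd
    -- so L - R is constant; evaluate at -n
    have hconst : ∀ a b : ℝ, L a - R a = L b - R b := by
      intro a b
      exact is_const_of_deriv_eq_zero (fun x => (hderiv x).differentiableAt)
        (fun x => (hderiv x).deriv) a b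
    have hval : L (-(n:ℝ)) - R (-(n:ℝ)) = 0 := by
      have hLv : L (-(n:ℝ)) = 1 := by
        have expand : L (-(n:ℝ)) = ∑ j ∈ range (n+1),
            ((n+1).choose (j+1) : ℝ) * (j:ℝ)^j * ((-(n:ℝ)) + ((n - j : ℕ):ℝ))^(n - j) := rfl
        rw [expand]
        have : ∀ j ∈ range (n+1),
            ((n+1).choose (j+1) : ℝ) * (j : ℝ)^j * ((-(n:ℝ)) + ((n - j : ℕ):ℝ))^(n - j)
            = ((n+1).choose (j+1) : ℝ) * (j:ℝ)^j * (-(j:ℝ))^(n-j) := by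
          intro j hj
          have hjn : j ≤ n := Nat.lt_succ_iff.mp (mem_range.mp hj)
          have : ((-(n:ℝ)) + ((n - j : ℕ):ℝ)) = -(j:ℝ) := by
            have : ((n - j : ℕ):ℝ) = (n:ℝ) - (j:ℝ) := by
              push_cast [Nat.cast_sub hjn]; ring
            rw [this]; ring
          rw [this]
        rw [Finset.sum_congr rfl this]
        exact eval_base n hn
      have hRv : R (-(n:ℝ)) = 1 := by
        have expand : R (-(n:ℝ)) = (-(n:ℝ) + ((n:ℝ)+1))^(n+1) - (-(n:ℝ) + ((n:ℝ)+1) - 1)^(n+1) := rfl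
        rw [expand]
        norm_num
      rw [hLv, hRv]; ring
    have := hconst y (-(n:ℝ))
    rw [hval] at this
    have hLR : L y = R y := by linarith
    -- translate goal
    have hgoal : (∑ j ∈ range (n+1),
        (((n+1).choose (j+1) : ℝ)) * (j : ℝ)^j * (y + (((n+1) - 1 - j : ℕ):ℝ))^((n+1) - 1 - j)) = L y := by
      apply Finset.sum_congr rfl
      intro j _
      have : (n+1) - 1 - j = n - j := by omega
      rw [this]
    calc (∑ j ∈ range (n+1),
        (((n+1).choose (j+1) : ℝ)) * (j : ℝ)^j * (y + (((n+1) - 1 - j : ℕ):ℝ))^((n+1) - 1 - j))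
        = L y := hgoal
      _ = R y := hLR
      _ = (y + ((n:ℝ)+1))^(n+1) - (y + ((n:ℝ)+1) - 1)^(n+1) := rfl
      _ = (y + ((n+1:ℕ):ℝ))^(n+1) - (y + ((n+1:ℕ):ℝ) - 1)^(n+1) := by push_cast; ring_nf

lemma abel_B (N : ℕ) (hN : 1 ≤ N) :
    ∑ j ∈ range N, (N.choose (j+1) : ℝ) * (j:ℝ)^j * (-((j:ℝ)+1))^(N-1-j) = (-1:ℝ)^(N+1) := by
  have H := abel_key N hN (-(N:ℝ))
  have h1 : ∀ j ∈ range N,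
      (N.choose (j+1) : ℝ) * (j:ℝ)^j * ((-(N:ℝ)) + ((N - 1 - j : ℕ):ℝ))^(N-1-j)
      = (N.choose (j+1) : ℝ) * (j:ℝ)^j * (-((j:ℝ)+1))^(N-1-j) := by
    intro j hj
    have hjN : j + 1 ≤ N := mem_range.mp hj
    have hcast : ((N - 1 - j : ℕ):ℝ) = (N:ℝ) - (j:ℝ) - 1 := by
      have h2 : (N - 1 - j : ℕ) = N - (j+1) := by omega
      rw [h2, Nat.cast_sub hjN]
      push_cast
      ring
    rw [hcast]
    have hbase : (-(N:ℝ) + ((N:ℝ) - (j:ℝ) - 1)) = -((j:ℝ)+1) := by ring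
    rw [hbase]
  rw [Finset.sum_congr rfl h1] at H
  rw [H, show (-(N:ℝ) + N) = 0 by ring]
  rw [zero_pow (by omega : N ≠ 0), show ((0:ℝ) - 1) = -1 by ring, pow_succ]
  ring



/-- coefficients of the series `T₁(z) = ∑ coef n · zⁿ` -/
noncomputable def coef : ℕ → ℝ
  | 0 => 0
  | (n+1) => (n:ℝ)^n / (Nat.factorial (n+1))

lemma coef_nonneg (n : ℕ) : 0 ≤ coef n := by
  cases n with
  | zero => simp [coef]
  | succ n => exact div_nonneg (pow_nonneg (Nat.cast_nonneg n) n) (by positivity)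

lemma rexp_eq_tsum (x : ℝ) : Real.exp x = ∑' n : ℕ, x ^ n / (Nat.factorial n) := by
  rw [Real.exp_eq_exp_ℝ, NormedSpace.exp_eq_tsum_div]

lemma pow_div_factorial_le_exp (n : ℕ) : (n:ℝ)^n / (Nat.factorial n) ≤ Real.exp n := by
  refine le_trans ?_ (Real.sum_le_exp_of_nonneg (Nat.cast_nonneg n) (n+1))
  have := Finset.single_le_sum (f := fun i => (n:ℝ)^i / (Nat.factorial i))
    (fun i _ => by positivity) (Finset.self_mem_range_succ n)
  simpa using this

lemma coef_le (n : ℕ) : coef n ≤ Real.exp 1 ^ n := by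
  cases n with
  | zero => simp [coef]
  | succ n =>
    show (n:ℝ)^n / (Nat.factorial (n+1)) ≤ Real.exp 1 ^ (n+1)
    have h1 : (n:ℝ)^n / (Nat.factorial (n+1)) ≤ (n:ℝ)^n / (Nat.factorial n) := by
      apply div_le_div_of_nonneg_left (by positivity) (by positivity)
      exact_mod_cast Nat.factorial_le (Nat.le_succ n)
    refine h1.trans ((pow_div_factorial_le_exp n).trans ?_)
    calc Real.exp (n : ℝ) ≤ Real.exp (((n+1:ℕ):ℝ) * 1) := by
          apply Real.exp_le_exp.mpr; push_cast; linarith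
      _ = Real.exp 1 ^ (n+1) := Real.exp_nat_mul 1 (n+1)

lemma summable_coef_pow {x : ℝ} (hx : Real.exp 1 * |x| < 1) :
    Summable (fun n => coef n * x ^ n) := by
  apply Summable.of_norm_bounded
    (summable_geometric_of_lt_one (by positivity) hx)
  intro n
  rw [Real.norm_eq_abs, abs_mul, abs_pow, mul_pow]
  gcongr
  rw [abs_of_nonneg (coef_nonneg n)]; exact coef_le n

lemma tone_eq {x : ℝ} (hx : Real.exp 1 * |x| < 1) :
    Tone x = ∑' n : ℕ, coef n * x ^ n := by
  have hs := summable_coef_pow hx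
  have hs1 : Summable (fun n => coef (n+1) * x^(n+1)) := (summable_nat_add_iff 1).mpr hs
  rw [Summable.tsum_eq_zero_add hs, Summable.tsum_eq_zero_add hs1]
  have h2 : ∑' n : ℕ, coef (n+1+1) * x^(n+1+1)
      = ∑' n : ℕ, ((n : ℝ) + 1) ^ (n + 1) * x ^ (n + 2) / (Nat.factorial (n + 2)) := by
    apply tsum_congr
    intro n
    show (((n+1:ℕ)):ℝ)^(n+1) / (Nat.factorial (n+1+1)) * x^(n+1+1) = _
    push_cast
    ring
  rw [h2, Tone]
  show _ = 0 * x^0 + (((0:ℕ):ℝ)^0/(Nat.factorial (0+1)) * x^(0+1) + _)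
  norm_num

noncomputable def dcoef : ℕ → ℝ := fun N => if N = 0 then 0 else (-1:ℝ)^(N+1)/(Nat.factorial N)

lemma tsum_dcoef (t : ℝ) : ∑' N : ℕ, dcoef N * t^N = 1 - Real.exp (-t) := by
  have heq : (fun N : ℕ => dcoef N * t^N)
      = fun N : ℕ => (if N = 0 then (1:ℝ) else 0) - (-t)^N / (Nat.factorial N) := by
    funext N
    rcases Nat.eq_zero_or_pos N with rfl | hN
    · simp [dcoef]
    · have hne : N ≠ 0 := by omega
      simp only [dcoef, if_neg hne]
      have hneg : (-t)^N = (-1:ℝ)^N * t^N := neg_pow t N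
      rw [hneg, pow_succ]
      ring
  rw [heq]
  rw [Summable.tsum_sub ⟨1, hasSum_ite_eq 0 1⟩ (Real.summable_pow_div_factorial (-t))]
  rw [tsum_ite_eq, ← rexp_eq_tsum]

set_option maxHeartbeats 1000000 in
lemma tone_small {t : ℝ} (ht : |t| ≤ 4⁻¹) :
    (∑' n : ℕ, coef n * (t * Real.exp (-t)) ^ n) = 1 - Real.exp (-t) := by
  classical
  have hexp4 : Real.exp |t| ≤ 4/3 := by
    have habs : 0 ≤ |t| := abs_nonneg t
    have h1 : 1 - |t| ≤ Real.exp (-|t|) := by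
      have := Real.add_one_le_exp (-|t|)
      linarith
    have h2 : (3/4 : ℝ) ≤ Real.exp (-|t|) := by linarith
    rw [Real.exp_neg] at h2
    have hpos : 0 < Real.exp |t| := Real.exp_pos _
    have hinv : (Real.exp |t|)⁻¹ * Real.exp |t| = 1 := inv_mul_cancel₀ hpos.ne'
    nlinarith
  have hq : |t| * Real.exp |t| ≤ 1/3 := by
    calc |t| * Real.exp |t| ≤ (1/4) * (4/3) := by
          apply mul_le_mul (by simpa using ht) hexp4 (Real.exp_pos _).le (by norm_num)
      _ = 1/3 := by norm_num
  have he3 : Real.exp 1 < 3 := lt_trans Real.exp_one_lt_d9 (by norm_num)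
  have hq1 : Real.exp 1 * (|t| * Real.exp |t|) < 1 := by
    have h0 : 0 < Real.exp 1 := Real.exp_pos 1
    nlinarith
  -- the double series
  set F : ℕ × ℕ → ℝ := fun p => coef p.1 * t^p.1 * ((-(p.1:ℝ)*t)^p.2 / (Nat.factorial p.2))
    with hF
  have habsF : ∀ p : ℕ × ℕ, |F p| = (coef p.1 * |t|^p.1) * (((p.1:ℝ)*|t|)^p.2 / (Nat.factorial p.2)) := by
    intro p
    simp only [hF, abs_mul, abs_div, abs_pow, abs_neg, Nat.abs_cast,
      abs_of_nonneg (coef_nonneg p.1)]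
    try ring
  have hrowsabs : ∀ m : ℕ, Summable (fun k => |F (m, k)|) := by
    intro m
    apply Summable.congr (((Real.summable_pow_div_factorial ((m:ℝ)*|t|)).mul_left
      (coef m * |t|^m)))
    intro k
    rw [habsF (m,k)]
  have hrowabs_sum : ∀ m : ℕ, (∑' k, |F (m,k)|) = coef m * (|t| * Real.exp |t|)^m := by
    intro m
    have : (∑' k, |F (m,k)|) = (coef m * |t|^m) * ∑' k, ((m:ℝ)*|t|)^k / (Nat.factorial k) := by
      rw [← tsum_mul_left]
      apply tsum_congr
      intro k
      rw [habsF (m,k)]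
    rw [this, ← rexp_eq_tsum, mul_pow, mul_assoc]
    congr 1
    rw [← Real.exp_nat_mul, mul_comm (m:ℝ) |t|]
  have habs : Summable (fun p => |F p|) := by
    rw [summable_prod_of_nonneg (fun p => abs_nonneg (F p))]
    constructor
    · exact hrowsabs
    · apply Summable.of_nonneg_of_le (fun m => tsum_nonneg (fun k => abs_nonneg _))
        (fun m => ?_) (summable_geometric_of_lt_one (by positivity) hq1)
      rw [hrowabs_sum m]
      calc coef m * (|t| * Real.exp |t|)^m
          ≤ Real.exp 1 ^ m * (|t| * Real.exp |t|)^m :=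
            mul_le_mul_of_nonneg_right (coef_le m)
              (pow_nonneg (mul_nonneg (abs_nonneg t) (Real.exp_pos _).le) m)
        _ = (Real.exp 1 * (|t| * Real.exp |t|))^m := (mul_pow _ _ m).symm
  have hsum : Summable F := summable_abs_iff.mp habs
  -- first evaluation: rows
  have hrows : ∀ m : ℕ, (∑' k, F (m,k)) = coef m * (t * Real.exp (-t))^m := by
    intro m
    have h1 : (∑' k, F (m,k)) = (coef m * t^m) * ∑' k, (-(m:ℝ)*t)^k / (Nat.factorial k) := by
      rw [← tsum_mul_left]
    rw [h1, ← rexp_eq_tsum, mul_pow, mul_assoc]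
    congr 1
    rw [← Real.exp_nat_mul]
    congr 1
    ring
  have hEq1 : (∑' p : ℕ × ℕ, F p) = ∑' n : ℕ, coef n * (t * Real.exp (-t)) ^ n := by
    rw [Summable.tsum_prod' hsum (fun m => (hrowsabs m).of_abs)]
    exact tsum_congr hrows
  -- second evaluation: antidiagonals
  have hdiag : ∀ N : ℕ, (∑ p ∈ Finset.HasAntidiagonal.antidiagonal N, F p) = dcoef N * t^N := by
    intro N
    rw [Finset.Nat.sum_antidiagonal_eq_sum_range_succ_mk]
    rcases Nat.eq_zero_or_pos N with rfl | hN
    · simp [hF, coef, dcoef]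
    · have hN0 : N ≠ 0 := by omega
      rw [Finset.sum_range_succ']
      have h0 : F (0, N - 0) = 0 := by simp [hF, coef]
      rw [h0, add_zero]
      have hterm : ∀ j ∈ range N, F (j+1, N - (j+1))
          = ((1:ℝ)/(Nat.factorial N)) * ((N.choose (j+1) : ℝ) * (j:ℝ)^j * (-((j:ℝ)+1))^(N-1-j)) * t^N := by
        intro j hj
        have hjN : j + 1 ≤ N := by
          have := mem_range.mp hj; omega
        have hexp2 : N - (j+1) = N - 1 - j := by omega
        have hfac : ((N.choose (j+1) : ℝ)) * (Nat.factorial (j+1)) * (Nat.factorial (N-1-j))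
            = (Nat.factorial N : ℝ) := by
          rw [← hexp2]
          exact_mod_cast congrArg (fun m : ℕ => (m:ℝ))
            (Nat.choose_mul_factorial_mul_factorial hjN)
        have hpowt : t^(j+1) * t^(N-1-j) = t^N := by
          rw [← pow_add]
          congr 1
          omega
        have hchne : ((N.choose (j+1) : ℝ)) ≠ 0 :=
          Nat.cast_ne_zero.mpr (Nat.choose_pos hjN).ne'
        have hfacne : (Nat.factorial (j+1) : ℝ) ≠ 0 := by positivity
        have hfacne2 : (Nat.factorial (N-1-j) : ℝ) ≠ 0 := by positivity
        show coef (j+1) * t^(j+1) * ((-((j+1:ℕ):ℝ)*t)^(N-(j+1)) / (Nat.factorial (N-(j+1)))) = _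
        rw [hexp2]
        show ((j:ℝ)^j / (Nat.factorial (j+1))) * t^(j+1)
            * ((-((j+1:ℕ):ℝ)*t)^(N-1-j) / (Nat.factorial (N-1-j))) = _
        rw [show (-((j+1:ℕ):ℝ)*t) = (-((j:ℝ)+1))*t by push_cast; ring, mul_pow,
          ← hfac, ← hpowt]
        field_simp
      rw [Finset.sum_congr rfl hterm, ← Finset.sum_mul, ← Finset.mul_sum, abel_B N hN]
      simp only [dcoef, if_neg hN0]
      ring
  have hEq2 : (∑' p : ℕ × ℕ, F p) = ∑' N : ℕ, dcoef N * t^N := by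
    have hEquiv : ∑' (c : Σ n : ℕ, (Finset.HasAntidiagonal.antidiagonal n : Finset (ℕ × ℕ))),
        F (Finset.HasAntidiagonal.sigmaAntidiagonalEquivProd c) = ∑' p : ℕ × ℕ, F p :=
      Finset.HasAntidiagonal.sigmaAntidiagonalEquivProd.tsum_eq F
    have hsig : Summable (fun c : (Σ n : ℕ, (Finset.HasAntidiagonal.antidiagonal n : Finset (ℕ × ℕ))) =>
        F (Finset.HasAntidiagonal.sigmaAntidiagonalEquivProd c)) := by
      exact Finset.HasAntidiagonal.sigmaAntidiagonalEquivProd.summable_iff.mpr hsum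
    have hsplit := Summable.tsum_sigma'
      (f := fun c : (Σ n : ℕ, (Finset.HasAntidiagonal.antidiagonal n : Finset (ℕ × ℕ))) =>
        F (Finset.HasAntidiagonal.sigmaAntidiagonalEquivProd c))
      (fun N => Summable.of_finite) hsig
    rw [← hEquiv, hsplit]
    apply tsum_congr
    intro N
    have hco : ∀ (p : (Finset.HasAntidiagonal.antidiagonal N : Finset (ℕ × ℕ))),
        F (Finset.HasAntidiagonal.sigmaAntidiagonalEquivProd ⟨N, p⟩) = F p := by
      intro p
      rfl
    rw [tsum_congr hco, Finset.tsum_subtype, hdiag N]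
  rw [← hEq1, hEq2, tsum_dcoef]

lemma exp_abs_le {t : ℝ} (h : |t| ≤ 4⁻¹) : Real.exp |t| ≤ 4/3 := by
  have habs : 0 ≤ |t| := abs_nonneg t
  have h1 : 1 - |t| ≤ Real.exp (-|t|) := by
    have := Real.add_one_le_exp (-|t|)
    linarith
  have h2 : (3/4 : ℝ) ≤ Real.exp (-|t|) := by linarith
  rw [Real.exp_neg] at h2
  have hpos : 0 < Real.exp |t| := Real.exp_pos _
  have hinv : (Real.exp |t|)⁻¹ * Real.exp |t| = 1 := inv_mul_cancel₀ hpos.ne'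
  nlinarith

lemma tone_analyticAt {x₀ : ℝ} (hx : Real.exp 1 * |x₀| < 1) : AnalyticAt ℝ Tone x₀ := by
  have he : (0:ℝ) < Real.exp 1 := Real.exp_pos 1
  have hinv : Real.exp 1 * (Real.exp 1)⁻¹ = 1 := mul_inv_cancel₀ he.ne'
  have hx0 : |x₀| < (Real.exp 1)⁻¹ := by nlinarith [abs_nonneg x₀]
  set r0 : ℝ := (|x₀| + (Real.exp 1)⁻¹)/2 with hr0
  have hr0pos : 0 < r0 := by positivity
  have hxr0 : |x₀| < r0 := by rw [hr0]; linarith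
  have her0 : Real.exp 1 * r0 < 1 := by
    rw [hr0]
    nlinarith [abs_nonneg x₀]
  set p := FormalMultilinearSeries.ofScalars ℝ coef with hp
  set r : NNReal := ⟨r0, hr0pos.le⟩ with hr
  have hrad : (r : ENNReal) ≤ p.radius := by
    apply FormalMultilinearSeries.le_radius_of_bound _ 1
    intro n
    rw [FormalMultilinearSeries.ofScalars_norm]
    have h1 : ‖coef n‖ ≤ Real.exp 1 ^ n := by
      rw [Real.norm_eq_abs, abs_of_nonneg (coef_nonneg n)]; exact coef_le n
    have hrr : ((r : NNReal) : ℝ) = r0 := rfl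
    calc ‖coef n‖ * ((r : NNReal) : ℝ)^n ≤ Real.exp 1 ^ n * r0^n := by
          rw [hrr]
          exact mul_le_mul_of_nonneg_right h1 (pow_nonneg hr0pos.le n)
      _ = (Real.exp 1 * r0)^n := (mul_pow _ _ n).symm
      _ ≤ 1^n := pow_le_pow_left₀ (by positivity) her0.le n
      _ = 1 := one_pow n
  have hradpos : 0 < p.radius :=
    lt_of_lt_of_le (by exact_mod_cast hr0pos : (0:ENNReal) < (r:ENNReal)) hrad
  have hmem : x₀ ∈ EMetric.ball (0:ℝ) p.radius := by
    change edist x₀ 0 < p.radius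
    rw [edist_zero_right, enorm_eq_nnnorm]
    calc (‖x₀‖₊ : ENNReal) < (r : ENNReal) := by
          rw [ENNReal.coe_lt_coe, ← NNReal.coe_lt_coe]
          simpa [Real.norm_eq_abs] using (show |x₀| < ((r : NNReal) : ℝ) from hxr0)
      _ ≤ p.radius := hrad
  have hanalytic := (p.hasFPowerSeriesOnBall hradpos).analyticAt_of_mem hmem
  apply hanalytic.congr
  have hopen : Metric.ball (0:ℝ) (Real.exp 1)⁻¹ ∈ nhds x₀ := by
    apply Metric.isOpen_ball.mem_nhds
    simpa [Real.dist_eq] using hx0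
  apply Filter.eventuallyEq_of_mem hopen
  intro x hxball
  have hx' : Real.exp 1 * |x| < 1 := by
    have hxa : |x| < (Real.exp 1)⁻¹ := by
      simpa [Real.dist_eq] using hxball
    nlinarith [abs_nonneg x]
  show p.sum x = Tone x
  rw [tone_eq hx']
  rw [show p.sum x = FormalMultilinearSeries.ofScalarsSum coef x from rfl,
    FormalMultilinearSeries.ofScalars_sum_eq]
  simp [smul_eq_mul]

lemma arg_bound {s : ℝ} (hs0 : -4⁻¹ < s) (hs1 : s < 1) :
    Real.exp 1 * |s * Real.exp (-s)| < 1 := by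
  rcases le_or_gt 0 s with hpos | hneg
  · have h1 : |s * Real.exp (-s)| = s * Real.exp (-s) :=
      abs_of_nonneg (mul_nonneg hpos (Real.exp_pos _).le)
    rw [h1]
    have h2 : s < Real.exp (s - 1) := by
      have := Real.add_one_lt_exp (x := s - 1) (by intro hcon; nlinarith)
      linarith
    have hE : (0:ℝ) < Real.exp (1 - s) := Real.exp_pos _
    have h3 : Real.exp (s-1) * Real.exp (1-s) = 1 := by
      rw [← Real.exp_add]; norm_num
    have h4 : Real.exp 1 * (s * Real.exp (-s)) = s * Real.exp (1-s) := by
      rw [show (1:ℝ) - s = 1 + -s by ring, Real.exp_add]; ring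
    rw [h4]
    nlinarith [mul_lt_mul_of_pos_right h2 hE]
  · have habs : |s| < 4⁻¹ := by
      rw [abs_lt]; constructor <;> [linarith; linarith]
    have h1 : |s * Real.exp (-s)| = |s| * Real.exp |s| := by
      rw [abs_mul, abs_of_pos (Real.exp_pos _), abs_of_neg hneg]
    rw [h1]
    have hexp4 : Real.exp |s| ≤ 4/3 := exp_abs_le habs.le
    have he3 : Real.exp 1 < 3 := lt_trans Real.exp_one_lt_d9 (by norm_num)
    have hsE : |s| * Real.exp |s| < 1/3 := by
      nlinarith [Real.exp_pos |s|, abs_nonneg s]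
    nlinarith [abs_nonneg s, Real.exp_pos |s|, Real.exp_pos 1,
      mul_nonneg (abs_nonneg s) (Real.exp_pos |s|).le]

lemma tone_comp_eq {t : ℝ} (ht0 : (0:ℝ) < t) (ht1 : t < 1) :
    Tone (t * Real.exp (-t)) = 1 - Real.exp (-t) := by
  have hmain : Set.EqOn (fun s => Tone (s * Real.exp (-s)))
      (fun s => 1 - Real.exp (-s)) (Set.Ioo (-4⁻¹ : ℝ) 1) := by
    have hf : AnalyticOnNhd ℝ (fun s => Tone (s * Real.exp (-s))) (Set.Ioo (-4⁻¹:ℝ) 1) := by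
      intro s hs
      have hinner : AnalyticAt ℝ (fun s : ℝ => s * Real.exp (-s)) s :=
        analyticAt_id.mul (analyticAt_id.neg.rexp)
      have houter := tone_analyticAt (arg_bound hs.1 hs.2)
      have := AnalyticAt.comp (g := Tone) (f := fun s : ℝ => s * Real.exp (-s)) (x := s) houter hinner
      exact this
    have hg : AnalyticOnNhd ℝ (fun s : ℝ => 1 - Real.exp (-s)) (Set.Ioo (-4⁻¹:ℝ) 1) :=
      fun s _ => analyticAt_const.sub (analyticAt_id.neg.rexp)
    apply hf.eqOn_of_preconnected_of_eventuallyEq hg isPreconnected_Ioo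
      (show (0:ℝ) ∈ Set.Ioo (-4⁻¹:ℝ) 1 by norm_num)
    have hU : Set.Ioo (-(4⁻¹:ℝ)) 4⁻¹ ∈ nhds (0:ℝ) := Ioo_mem_nhds (by norm_num) (by norm_num)
    apply Filter.eventuallyEq_of_mem hU
    intro s hs
    have habs : |s| ≤ 4⁻¹ := by
      rw [abs_le]; exact ⟨hs.1.le, hs.2.le⟩
    have hb : Real.exp 1 * |s * Real.exp (-s)| < 1 := by
      apply arg_bound (by linarith [hs.1]) (by nlinarith [hs.2])
    show Tone (s * Real.exp (-s)) = 1 - Real.exp (-s)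
    rw [tone_eq hb, tone_small habs]
  exact hmain (Set.mem_Ioo.mpr ⟨by linarith, ht1⟩)

/-- If `u > 0`, `t ∈ (0,1)` satisfies `e^{−t}/(1−t) = 1+u`, and `c = t·e^{−t}/u`,
then `c/(1 + (1/u)·T_1(u·c)) = 1 − t`. -/
theorem stmt_16 (u t : ℝ) (hu : 0 < u) (ht0 : 0 < t) (ht1 : t < 1)
    (h : Real.exp (-t) / (1 - t) = 1 + u) :
    (t * Real.exp (-t) / u) /
        (1 + (1 / u) * Tone (u * (t * Real.exp (-t) / u))) = 1 - t := by
  have hu0 : u ≠ 0 := hu.ne'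
  have harg : u * (t * Real.exp (-t) / u) = t * Real.exp (-t) := by field_simp
  rw [harg, tone_comp_eq ht0 ht1]
  have ht1' : (1:ℝ) - t ≠ 0 := by intro hc; apply absurd hc; intro hc2; linarith
  have hE : Real.exp (-t) = (1 + u) * (1 - t) := by
    rw [div_eq_iff ht1'] at h
    linarith [h]
  have h1u : (0:ℝ) < 1 + u := by linarith
  have hden : 1 + (1/u) * (1 - Real.exp (-t)) = (1 + u) * t / u := by
    rw [hE]; field_simp; ring
  rw [hden, hE]
  rw [div_div_div_eq]
  rw [div_eq_iff (by positivity : u*((1+u)*t) ≠ 0)]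
  ring
end
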